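/- arXiv:2603.19175 — 5 statements merged into one kernel-verified Lean document; each statement's English description precedes it below -/
import Mathlib

section
/- Let R = k[x_1,…,x_n] and let J ⊂ R be a homogeneous ideal of height 2 generated by three forms f_1, f_2, f_3 of degree d, with {f_1,f_2} a regular sequence. If z_0 = (p_1,p_2,p_3)^t is a nonzero syzygy of minimal degree in Syz(J) ⊂ R^3, then the quotient module Syz(J)/R·z_0 is torsion-free. -/
open MvPolynomial

noncomputable def idealHeight {R : Type*} [CommRing R] (I : Ideal R) : ℕ∞ :=
  ⨅ (P : PrimeSpectrum R) (_ : I ≤ P.asIdeal), Order.height P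

namespace SyzAux

variable {σ R : Type*} [CommRing R]

/-- Homogenization transfer map. -/
noncomputable def T : MvPolynomial σ R →ₐ[R] Polynomial (MvPolynomial σ R) :=
  MvPolynomial.aeval (fun i => Polynomial.C (MvPolynomial.X i) * Polynomial.X)

lemma coeff_T (p : MvPolynomial σ R) (m : ℕ) :
    (T p).coeff m = MvPolynomial.homogeneousComponent m p := by
  induction p using MvPolynomial.induction_on' with
  | add p q hp hq => simp [map_add, hp, hq]
  | monomial d c =>
    have hT : T (monomial d c) = Polynomial.C (monomial d c) * Polynomial.X ^ (Finsupp.degree d) := by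
      rw [T, aeval_monomial, monomial_eq]
      simp only [Finsupp.prod, mul_pow, Finset.prod_mul_distrib, ← Polynomial.C_pow,
        ← map_prod, Finset.prod_pow_eq_pow_sum, Finsupp.degree]
      simp only [Polynomial.algebraMap_apply, MvPolynomial.algebraMap_eq, map_mul]
      change _ = _ * Polynomial.X ^ (∑ i ∈ d.support, d i)
      ring
    classical
    rw [hT]
    ext e
    simp only [Polynomial.coeff_C_mul, Polynomial.coeff_X_pow, coeff_homogeneousComponent,
      MvPolynomial.coeff_monomial, mul_ite, mul_one, mul_zero, MvPolynomial.coeff_zero]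
    split_ifs with h1 h2 h3 <;>
      first
      | rfl
      | (subst_vars; simp [MvPolynomial.coeff_monomial]; try tauto)
      | (intro h; subst_vars; tauto)



lemma T_ne_zero {p : MvPolynomial σ R} (hp : p ≠ 0) : T p ≠ 0 := by
  intro h
  apply hp
  calc p = ∑ i ∈ Finset.range (p.totalDegree + 1), homogeneousComponent i p :=
        (MvPolynomial.sum_homogeneousComponent p).symm
    _ = 0 := Finset.sum_eq_zero fun i _ => by rw [← coeff_T, h, Polynomial.coeff_zero]

lemma homog_of_T {p : MvPolynomial σ R} (hp : p ≠ 0)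
    (h : (T p).natTrailingDegree = (T p).natDegree) :
    p.IsHomogeneous (T p).natDegree := by
  have key : p = homogeneousComponent (T p).natDegree p := by
    conv_lhs => rw [← MvPolynomial.sum_homogeneousComponent p]
    apply Finset.sum_eq_single
    · intro b _ hb
      rw [← coeff_T]
      rcases lt_or_gt_of_ne hb with hlt | hgt
      · exact Polynomial.coeff_eq_zero_of_lt_natTrailingDegree (h ▸ hlt)
      · exact Polynomial.coeff_eq_zero_of_natDegree_lt hgt
    · intro hnot
      exact homogeneousComponent_eq_zero _ p (by simpa using hnot)
  have := homogeneousComponent_isHomogeneous (T p).natDegree p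
  rwa [← key] at this

lemma isHomogeneous_of_mul [IsDomain R] {p q : MvPolynomial σ R} {m : ℕ}
    (h : (p * q).IsHomogeneous m) (hp : p ≠ 0) (hq : q ≠ 0) :
    ∃ a b : ℕ, a + b = m ∧ p.IsHomogeneous a ∧ q.IsHomogeneous b := by
  have hpq : p * q ≠ 0 := mul_ne_zero hp hq
  have hTp := T_ne_zero hp
  have hTq := T_ne_zero hq
  have hT : (T p) * (T q) = Polynomial.monomial m (p * q) := by
    rw [← map_mul]
    ext j
    rw [coeff_T, Polynomial.coeff_monomial,
      homogeneousComponent_of_mem ((mem_homogeneousSubmodule _ _).2 h)]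
    by_cases hj : j = m
    · simp [hj]
    · simp [hj, Ne.symm hj]
  have hd : (T p).natDegree + (T q).natDegree = m := by
    classical
    rw [← Polynomial.natDegree_mul hTp hTq, hT, Polynomial.natDegree_monomial, if_neg hpq]
  classical
  have ht : (T p).natTrailingDegree + (T q).natTrailingDegree = m := by
    rw [← Polynomial.natTrailingDegree_mul hTp hTq, hT,
      Polynomial.natTrailingDegree_monomial hpq]
  have l1 := Polynomial.natTrailingDegree_le_natDegree (T p)
  have l2 := Polynomial.natTrailingDegree_le_natDegree (T q)
  have hp1 : (T p).natTrailingDegree = (T p).natDegree := by omega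
  have hq1 : (T q).natTrailingDegree = (T q).natDegree := by omega
  exact ⟨_, _, hd, homog_of_T hp hp1, homog_of_T hq hq1⟩

end SyzAux

/-- Let `R = k[x_1,…,x_n]` and `J = ⟨f₁,f₂,f₃⟩ ⊂ R` a homogeneous ideal of height `2`
generated by three forms of degree `d` with `f₁, f₂` a regular sequence.  If
`z₀ = (p₁,p₂,p₃)` is a nonzero homogeneous syzygy of minimal degree in
`Syz(J) = ker((a₁,a₂,a₃) ↦ Σ aᵢfᵢ)`, then `Syz(J)/R·z₀` is torsion-free:
whenever `r ∈ R` is nonzero, `z ∈ Syz(J)` and `r·z ∈ R·z₀`, already `z ∈ R·z₀`. -/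
theorem syzygy_quotient_torsionFree {k : Type*} [Field k] {n : ℕ} (hn : 3 ≤ n)
    (d : ℕ) (f : Fin 3 → MvPolynomial (Fin n) k)
    (hf : ∀ i, (f i).IsHomogeneous d)
    (hht : idealHeight (Ideal.span (Set.range f)) = 2)
    (hreg : RingTheory.Sequence.IsRegular (MvPolynomial (Fin n) k) [f 0, f 1])
    (Syz : Submodule (MvPolynomial (Fin n) k) (Fin 3 → MvPolynomial (Fin n) k))
    (hSyz : Syz = LinearMap.ker
      (Fintype.linearCombination (MvPolynomial (Fin n) k) f))
    (z₀ : Fin 3 → MvPolynomial (Fin n) k) (δ₀ : ℕ)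
    (hz₀S : z₀ ∈ Syz) (hz₀ne : z₀ ≠ 0)
    (hz₀h : ∀ i, (z₀ i).IsHomogeneous δ₀)
    (hz₀min : ∀ (z : Fin 3 → MvPolynomial (Fin n) k) (e : ℕ),
      z ∈ Syz → z ≠ 0 → (∀ i, (z i).IsHomogeneous e) → δ₀ ≤ e) :
    ∀ (r : MvPolynomial (Fin n) k) (z : Fin 3 → MvPolynomial (Fin n) k),
      r ≠ 0 → z ∈ Syz →
      r • z ∈ Submodule.span (MvPolynomial (Fin n) k) {z₀} →
      z ∈ Submodule.span (MvPolynomial (Fin n) k) {z₀} := by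
  intro r z hr hz hmem
  rw [Submodule.mem_span_singleton] at hmem ⊢
  obtain ⟨s, hs⟩ := hmem
  by_cases hs0 : s = 0
  · subst hs0
    refine ⟨0, ?_⟩
    rw [zero_smul] at hs ⊢
    funext i
    have h1 : (0 : MvPolynomial (Fin n) k) = r * z i := congrFun hs i
    rcases mul_eq_zero.1 h1.symm with h | h
    · exact absurd h hr
    · exact h.symm
  · obtain ⟨r', s', c, hcop, hcr, hcs⟩ :=
      UniqueFactorizationMonoid.exists_reduced_factors r hr s
    have hc0 : c ≠ 0 := fun h => hr (by rw [← hcr, h, zero_mul])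
    have hr'0 : r' ≠ 0 := fun h => hr (by rw [← hcr, h, mul_zero])
    have hs'0 : s' ≠ 0 := fun h => hs0 (by rw [← hcs, h, mul_zero])
    have key : ∀ i, r' * z i = s' * z₀ i := by
      intro i
      have h1 : s * z₀ i = r * z i := congrFun hs i
      rw [← hcr, ← hcs] at h1
      apply mul_left_cancel₀ hc0
      rw [← mul_assoc, ← mul_assoc]
      exact h1.symm
    have hdvd : ∀ i, r' ∣ z₀ i := fun i =>
      hcop.dvd_of_dvd_mul_left ⟨z i, (key i).symm⟩
    choose w hw using hdvd
    obtain ⟨i₀, hi₀⟩ : ∃ i, z₀ i ≠ 0 := Function.ne_iff.1 hz₀ne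
    have hwi₀ : w i₀ ≠ 0 := fun h => hi₀ (by rw [hw i₀, h, mul_zero])
    obtain ⟨a, b, hab, hra, hwb⟩ :=
      SyzAux.isHomogeneous_of_mul ((hw i₀) ▸ hz₀h i₀) hr'0 hwi₀
    -- every w i is homogeneous of degree b
    have hwh : ∀ i, (w i).IsHomogeneous b := by
      intro i
      by_cases h0 : z₀ i = 0
      · have : w i = 0 := by
          rcases mul_eq_zero.1 (hw i ▸ h0) with h | h
          · exact absurd h hr'0
          · exact h
        rw [this]
        exact isHomogeneous_zero _ _ _
      · have hwi : w i ≠ 0 := fun h => h0 (by rw [hw i, h, mul_zero])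
        obtain ⟨a', b', hab', hra', hwb'⟩ :=
          SyzAux.isHomogeneous_of_mul ((hw i) ▸ hz₀h i) hr'0 hwi
        have ha' : a' = a := hra'.inj_right hra hr'0
        have : b' = b := by omega
        exact this ▸ hwb'
    -- w is a syzygy
    have hwS : w ∈ Syz := by
      rw [hSyz, LinearMap.mem_ker, Fintype.linearCombination_apply]
      have h0 : ∑ i, z₀ i • f i = 0 := by
        rw [hSyz, LinearMap.mem_ker, Fintype.linearCombination_apply] at hz₀S
        exact hz₀S
      have : r' * ∑ i, w i • f i = 0 := by
        rw [Finset.mul_sum]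
        rw [← h0]
        apply Finset.sum_congr rfl
        intro i _
        rw [hw i]
        ring_nf
      rcases mul_eq_zero.1 this with h | h
      · exact absurd h hr'0
      · exact h
    have hw0 : w ≠ 0 := fun h => hwi₀ (congrFun h i₀)
    have hmin := hz₀min w b hwS hw0 hwh
    have ha0 : a = 0 := by omega
    -- r' is a nonzero constant
    subst ha0
    set u := coeff 0 r' with hu_def
    have hCr : r' = C u := by
      ext e
      rw [coeff_C]
      by_cases he : e = 0
      · subst he; simp; exact hu_def.symm
      · rw [if_neg (Ne.symm he)]
        apply hra.coeff_eq_zero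
        simpa [Finsupp.degree_eq_zero_iff] using he
    have hu : u ≠ 0 := fun h => hr'0 (by rw [hCr, h, map_zero])
    refine ⟨C u⁻¹ * s', ?_⟩
    funext i
    have : (C u⁻¹ * s') * z₀ i = z i := by
      rw [mul_assoc, ← key i, hCr, ← mul_assoc, ← map_mul, inv_mul_cancel₀ hu, map_one, one_mul]
    simpa [smul_eq_mul] using this
end

section
/- With η = [A; B] an (m+1)×m block matrix over R = k[x_1,…,x_n] (A of size 3×m, B of size (m−2)×m) and p_1,…,p_{m+1} its signed maximal minors ordered so that p_1,p_2,p_3 fix B, one has the inclusion I_{m−2}(B)·⟨p_4,…,p_{m+1}⟩ ⊆ ⟨p_1,p_2,p_3⟩; consequently I_{m−2}(B) ⊆ (⟨p_1,p_2,p_3⟩ : I_m(η)). -/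
open MvPolynomial

def minorsIdeal {R : Type*} [CommRing R] {a b : ℕ} (M : Matrix (Fin a) (Fin b) R)
    (t : ℕ) : Ideal R :=
  Ideal.span { d | ∃ (r : Fin t → Fin a) (c : Fin t → Fin b), d = (M.submatrix r c).det }

/-- the `i`-th signed maximal minor of an `(m+1) × m` matrix. -/
def signedMinor {R : Type*} [CommRing R] {m : ℕ} (η : Matrix (Fin (m + 1)) (Fin m) R)
    (i : Fin (m + 1)) : R :=
  (-1 : R) ^ (i : ℕ) * (η.submatrix i.succAbove id).det

/-- Laplace relation: the signed maximal minors annihilate the columns of `η`. -/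
lemma signedMinor_rel {R : Type*} [CommRing R] {m : ℕ}
    (η : Matrix (Fin (m + 1)) (Fin m) R) (j : Fin m) :
    ∑ i : Fin (m + 1), signedMinor η i * η i j = 0 := by
  set N : Matrix (Fin (m + 1)) (Fin (m + 1)) R :=
    Matrix.of (fun a b => η a ((Fin.cons j id : ∀ _ : Fin (m+1), Fin m) b)) with hN
  have h0 : N.det = 0 := by
    refine Matrix.det_zero_of_column_eq (i := 0) (j := j.succ) (Fin.succ_ne_zero j).symm ?_
    intro a
    simp [hN]
  rw [Matrix.det_succ_column_zero] at h0
  calc ∑ i : Fin (m + 1), signedMinor η i * η i j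
      = ∑ i : Fin (m + 1), (-1 : R) ^ (i : ℕ) * N i 0 *
          (N.submatrix i.succAbove Fin.succ).det := by
        refine Finset.sum_congr rfl fun i _ => ?_
        have hsub : N.submatrix i.succAbove Fin.succ = η.submatrix i.succAbove id := by
          ext a b
          simp [hN]
        rw [hsub]
        simp only [hN, Matrix.of_apply, Fin.cons_zero, signedMinor]
        ring
    _ = 0 := h0

set_option maxHeartbeats 1000000 in
/-- Let `η = [A; B]` be an `(m+1) × m` block matrix over `R = k[x_1,…,x_n]`, with `A` the
first three rows and `B` the remaining `m−2` rows, and `p₁,…,p_{m+1}` its signed maximal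
minors, `p₁,p₂,p₃` those fixing `B`.  Then
`I_{m−2}(B)·⟨p₄,…,p_{m+1}⟩ ⊆ ⟨p₁,p₂,p₃⟩`, and consequently
`I_{m−2}(B) ⊆ (⟨p₁,p₂,p₃⟩ : I_m(η))`. -/
theorem minors_of_B_multiply_into_first_three {k : Type*} [Field k] {n : ℕ}
    {m : ℕ} (hm : 3 ≤ m)
    (η : Matrix (Fin (m + 1)) (Fin m) (MvPolynomial (Fin n) k))
    (B : Matrix (Fin (m - 2)) (Fin m) (MvPolynomial (Fin n) k))
    (hB : ∀ (i : Fin (m - 2)) (j : Fin m),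
      B i j = η ⟨(i : ℕ) + 3, by have := i.isLt; omega⟩ j)
    (J : Ideal (MvPolynomial (Fin n) k))
    (hJ : J = Ideal.span {signedMinor η ⟨0, by omega⟩, signedMinor η ⟨1, by omega⟩,
      signedMinor η ⟨2, by omega⟩}) :
    minorsIdeal B (m - 2) *
        Ideal.span (Set.range fun i : Fin (m - 2) =>
          signedMinor η ⟨(i : ℕ) + 3, by have := i.isLt; omega⟩) ≤ J ∧
      minorsIdeal B (m - 2) ≤ Submodule.colon (J : Submodule (MvPolynomial (Fin n) k)
        (MvPolynomial (Fin n) k)) (minorsIdeal η m) := by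
  -- small minors `p₁, p₂, p₃` belong to `J`
  have hp : ∀ (i : Fin (m + 1)), (i : ℕ) < 3 → signedMinor η i ∈ J := by
    intro i h
    rw [hJ]
    apply Ideal.subset_span
    simp only [Set.mem_insert_iff, Set.mem_singleton_iff]
    rcases (by omega : (i : ℕ) = 0 ∨ (i : ℕ) = 1 ∨ (i : ℕ) = 2) with h0 | h0 | h0
    · exact Or.inl (congrArg _ (Fin.ext h0))
    · exact Or.inr (Or.inl (congrArg _ (Fin.ext h0)))
    · exact Or.inr (Or.inr (congrArg _ (Fin.ext h0)))
  -- splitting sums over `Fin (m+1)`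
  have hsplit : ∀ f : ℕ → MvPolynomial (Fin n) k,
      ∑ i ∈ Finset.range (m + 1), f i
        = f 0 + f 1 + f 2 + ∑ u ∈ Finset.range (m - 2), f (3 + u) := by
    intro f
    have h1 : ∑ i ∈ Finset.range 3, f i + ∑ i ∈ Finset.Ico 3 (m + 1), f i
        = ∑ i ∈ Finset.range (m + 1), f i :=
      Finset.sum_range_add_sum_Ico f (by omega)
    rw [← h1, Finset.sum_Ico_eq_sum_range]
    have h2 : m + 1 - 3 = m - 2 := by omega
    rw [h2]
    simp [Finset.sum_range_succ]
  -- the key row relation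
  have hrow : ∀ jj : Fin m,
      ∑ u : Fin (m - 2),
        signedMinor η ⟨(u : ℕ) + 3, by have := u.isLt; omega⟩ *
          η ⟨(u : ℕ) + 3, by have := u.isLt; omega⟩ jj ∈ J := by
    intro jj
    have h0 := signedMinor_rel η jj
    set f : ℕ → MvPolynomial (Fin n) k :=
      fun i => if h : i < m + 1 then signedMinor η ⟨i, h⟩ * η ⟨i, h⟩ jj else 0 with hf
    have h1 : ∑ i : Fin (m + 1), signedMinor η i * η i jj = ∑ i ∈ Finset.range (m + 1), f i := by
      rw [← Fin.sum_univ_eq_sum_range]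
      refine Finset.sum_congr rfl fun i _ => ?_
      simp [hf, i.isLt]
      exact fun h => absurd h (by have := i.isLt; omega)
    rw [h1, hsplit f] at h0
    have h2 : ∑ u : Fin (m - 2),
        signedMinor η ⟨(u : ℕ) + 3, by have := u.isLt; omega⟩ *
          η ⟨(u : ℕ) + 3, by have := u.isLt; omega⟩ jj
        = ∑ u ∈ Finset.range (m - 2), f (3 + u) := by
      rw [← Fin.sum_univ_eq_sum_range (fun u => f (3 + u))]
      refine Finset.sum_congr rfl fun u _ => ?_
      have hu : 3 + (u : ℕ) < m + 1 := by have := u.isLt; omega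
      simp only [hf, dif_pos hu]
      have he : (⟨(u : ℕ) + 3, by have := u.isLt; omega⟩ : Fin (m + 1))
          = ⟨3 + (u : ℕ), hu⟩ := Fin.ext (by simp; omega)
      rw [he]
    rw [h2]
    have h3 : ∑ u ∈ Finset.range (m - 2), f (3 + u) = -(f 0 + f 1 + f 2) := by
      linear_combination h0
    rw [h3]
    have hfi : ∀ (i : ℕ) (h : i < m + 1), (i : ℕ) < 3 → f i ∈ J := by
      intro i h h3'
      simp only [hf, dif_pos h]
      exact Ideal.mul_mem_right _ _ (hp ⟨i, h⟩ h3')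
    exact neg_mem (add_mem (add_mem (hfi 0 (by omega) (by omega)) (hfi 1 (by omega) (by omega)))
      (hfi 2 (by omega) (by omega)))
  -- key lemma: any maximal minor of B times p_{l+3} lies in J
  have key : ∀ (r : Fin (m - 2) → Fin (m - 2)) (c : Fin (m - 2) → Fin m) (l : Fin (m - 2)),
      (B.submatrix r c).det * signedMinor η ⟨(l : ℕ) + 3, by have := l.isLt; omega⟩ ∈ J := by
    intro r c l
    by_cases hr : Function.Injective r
    · have hbij : Function.Bijective r := Finite.injective_iff_bijective.mp hr
      obtain ⟨t, ht⟩ := hbij.2 l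
      set M := B.submatrix r c with hM
      set a : Fin (m - 2) → MvPolynomial (Fin n) k :=
        fun t' => signedMinor η ⟨((r t' : ℕ)) + 3, by have := (r t').isLt; omega⟩ with ha
      have hw : ∀ s, (∑ t' : Fin (m - 2), a t' * M t' s) ∈ J := by
        intro s
        have heq : (∑ t' : Fin (m - 2), a t' * M t' s)
            = ∑ u : Fin (m - 2), signedMinor η ⟨(u : ℕ) + 3, by have := u.isLt; omega⟩ *
                η ⟨(u : ℕ) + 3, by have := u.isLt; omega⟩ (c s) :=
          Fintype.sum_bijective r hbij _ _ fun t' => by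
            rw [ha, hM]
            simp only [Matrix.submatrix_apply]
            rw [hB]
        rw [heq]
        exact hrow (c s)
      have h1 : ∀ t' : Fin (m - 2), ∑ s : Fin (m - 2), M t' s * M.adjugate s t
          = M.det * (1 : Matrix (Fin (m - 2)) (Fin (m - 2)) (MvPolynomial (Fin n) k)) t' t := by
        intro t'
        rw [← Matrix.mul_apply, Matrix.mul_adjugate, Matrix.smul_apply, smul_eq_mul]
      have hcalc : ∑ s : Fin (m - 2), (∑ t' : Fin (m - 2), a t' * M t' s) * M.adjugate s t
          = a t * M.det := by
        calc ∑ s : Fin (m - 2), (∑ t' : Fin (m - 2), a t' * M t' s) * M.adjugate s t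
            = ∑ t' : Fin (m - 2), a t' * ∑ s : Fin (m - 2), M t' s * M.adjugate s t := by
              simp only [Finset.sum_mul, Finset.mul_sum, mul_assoc]
              rw [Finset.sum_comm]
          _ = ∑ t' : Fin (m - 2), a t' *
                (M.det * (1 : Matrix (Fin (m - 2)) (Fin (m - 2)) (MvPolynomial (Fin n) k)) t' t) := by
              refine Finset.sum_congr rfl fun t' _ => ?_
              rw [h1]
          _ = a t * M.det := by
              rw [Finset.sum_eq_single t]
              · rw [Matrix.one_apply_eq, mul_one]
              · intro b _ hb
                rw [Matrix.one_apply_ne hb, mul_zero, mul_zero]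
              · intro h
                exact absurd (Finset.mem_univ t) h
      have hat : a t = signedMinor η ⟨(l : ℕ) + 3, by have := l.isLt; omega⟩ := by
        rw [ha]
        exact congrArg _ (Fin.ext (by simp [ht]))
      have hgoal : M.det * signedMinor η ⟨(l : ℕ) + 3, by have := l.isLt; omega⟩
          = ∑ s : Fin (m - 2), (∑ t' : Fin (m - 2), a t' * M t' s) * M.adjugate s t := by
        rw [hcalc, hat, mul_comm]
      rw [hgoal]
      exact Ideal.sum_mem _ fun s _ => Ideal.mul_mem_right _ _ (hw s)
    · obtain ⟨x, y, hxy, hne⟩ := Function.not_injective_iff.mp hr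
      have h0 : (B.submatrix r c).det = 0 :=
        Matrix.det_zero_of_row_eq hne (funext fun s => by
          simp only [Matrix.submatrix_apply, hxy])
      rw [h0, zero_mul]
      exact J.zero_mem
  -- every maximal minor of η lies in the span of the signed minors
  have hIm : minorsIdeal η m ≤ Ideal.span (Set.range (signedMinor η)) := by
    rw [minorsIdeal]
    refine Ideal.span_le.mpr ?_
    rintro x ⟨r', c', rfl⟩
    by_cases hc : Function.Injective c'
    · by_cases hr : Function.Injective r'
      · have hns : ¬ Function.Surjective r' := by
          intro hs
          have := Fintype.card_le_of_surjective r' hs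
          simp at this
        rw [Function.Surjective] at hns
        push_neg at hns
        obtain ⟨i0, hi0⟩ := hns
        choose σ hσ using fun t => Fin.exists_succAbove_eq (hi0 t)
        have hσinj : Function.Injective σ := fun x y hxy => hr (by rw [← hσ x, ← hσ y, hxy])
        set eσ := Equiv.ofBijective σ (Finite.injective_iff_bijective.mp hσinj) with heσ
        set ec := Equiv.ofBijective c' (Finite.injective_iff_bijective.mp hc) with hec
        set M := η.submatrix i0.succAbove id with hMdef
        have hMm : η.submatrix r' c'
            = (M.submatrix eσ eσ).submatrix id (ec.trans eσ.symm) := by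
          ext x y
          simp only [Matrix.submatrix_apply, Equiv.trans_apply, Equiv.apply_symm_apply,
            heσ, hec, Equiv.ofBijective_apply, hMdef, id_eq, hσ]
        rw [hMm, Matrix.det_permute', Matrix.det_submatrix_equiv_self]
        have hMspan : M.det ∈ Ideal.span (Set.range (signedMinor η)) := by
          have h1 : M.det = (-1 : MvPolynomial (Fin n) k) ^ (i0 : ℕ) * signedMinor η i0 := by
            rw [signedMinor, ← mul_assoc, ← pow_add,
              Even.neg_one_pow ⟨(i0 : ℕ), rfl⟩, one_mul]
          rw [h1]
          exact Ideal.mul_mem_left _ _ (Ideal.subset_span ⟨i0, rfl⟩)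
        rcases Int.units_eq_one_or (Equiv.Perm.sign (ec.trans eσ.symm)) with h | h <;> rw [h]
        · simpa using hMspan
        · simpa using neg_mem hMspan
      · obtain ⟨x, y, hxy, hne⟩ := Function.not_injective_iff.mp hr
        have h0 : (η.submatrix r' c').det = 0 :=
          Matrix.det_zero_of_row_eq hne (funext fun s => by
            simp only [Matrix.submatrix_apply, hxy])
        rw [h0]
        exact Ideal.zero_mem _
    · obtain ⟨x, y, hxy, hne⟩ := Function.not_injective_iff.mp hc
      have h0 : (η.submatrix r' c').det = 0 :=
        Matrix.det_zero_of_column_eq hne (fun s => by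
          simp only [Matrix.submatrix_apply, hxy])
      rw [h0]
      exact Ideal.zero_mem _
  constructor
  · rw [minorsIdeal, Ideal.span_mul_span']
    refine Ideal.span_le.mpr ?_
    rintro x ⟨d, ⟨r, c, rfl⟩, s, ⟨l, rfl⟩, rfl⟩
    exact key r c l
  · rw [minorsIdeal]
    refine Ideal.span_le.mpr ?_
    rintro d ⟨r, c, rfl⟩
    rw [SetLike.mem_coe, Submodule.mem_colon]
    intro q hq
    have hq' := hIm hq
    rw [smul_eq_mul]
    have hsub : Ideal.span (Set.range (signedMinor η)) ≤
        Submodule.comap (LinearMap.lsmul (MvPolynomial (Fin n) k) (MvPolynomial (Fin n) k)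
          ((B.submatrix r c).det))
          (J : Submodule (MvPolynomial (Fin n) k) (MvPolynomial (Fin n) k)) := by
      refine Submodule.span_le.mpr ?_
      rintro x ⟨i, rfl⟩
      simp only [SetLike.mem_coe, Submodule.mem_comap, LinearMap.lsmul_apply, smul_eq_mul]
      by_cases hi : (i : ℕ) < 3
      · exact Ideal.mul_mem_left _ _ (hp i hi)
      · have hlt : (i : ℕ) - 3 < m - 2 := by have := i.isLt; omega
        have he : (⟨((⟨(i : ℕ) - 3, hlt⟩ : Fin (m - 2)) : ℕ) + 3,
            by have := i.isLt; omega⟩ : Fin (m + 1)) = i :=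
          Fin.ext (by simp; omega)
        have hk := key r c ⟨(i : ℕ) - 3, hlt⟩
        rwa [he] at hk
    have hfin := hsub hq'
    simpa using hfin
end

section
/- Let (d, m, δ, ε) be latent data and η = [A; B] a (d,m,δ,ε)-level matrix, K the m×m skew-symmetric matrix of signed maximal minors of B. Then for all 1 ≤ i ≤ 3 and 1 ≤ j ≤ m, the (i,j) entry of the product matrix AK is homogeneous of degree δ_j. -/
open MvPolynomial

section helpers
variable {σ : Type*} {R : Type*} [CommRing R]

lemma weight_one_int (d : σ →₀ ℕ) :
    Finsupp.weight (fun _ : σ => (1:ℤ)) d = ((Finsupp.weight (1 : σ → ℕ) d : ℕ) : ℤ) := by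
  simp [Finsupp.weight_apply, Finsupp.sum]

lemma ihz_of_isHomogeneous {p : MvPolynomial σ R} {a : ℕ} (h : p.IsHomogeneous a) :
    IsWeightedHomogeneous (fun _ : σ => (1:ℤ)) p (a : ℤ) := by
  intro d hd
  rw [weight_one_int, h hd]

lemma isHomogeneous_of_ihz {p : MvPolynomial σ R} {a : ℕ}
    (h : IsWeightedHomogeneous (fun _ : σ => (1:ℤ)) p (a : ℤ)) : p.IsHomogeneous a := by
  intro d hd
  have := h hd
  rw [weight_one_int] at this
  exact_mod_cast this

local notation "IHZ" => IsWeightedHomogeneous (fun _ : σ => (1:ℤ))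

lemma ihz_det {s : ℕ} (M : Matrix (Fin s) (Fin s) (MvPolynomial σ R)) (a b : Fin s → ℤ)
    (h : ∀ l c, IHZ (M l c) (a l + b c)) :
    IHZ M.det (∑ l, a l + ∑ c, b c) := by
  rw [Matrix.det_apply']
  apply IsWeightedHomogeneous.sum
  intro τ _
  have hp : IHZ (∏ i, M (τ i) i) (∑ i, (a (τ i) + b i)) :=
    IsWeightedHomogeneous.prod _ _ _ (fun i _ => h _ _)
  have he : (∑ i, (a (τ i) + b i)) = ∑ l, a l + ∑ c, b c := by
    rw [Finset.sum_add_distrib, Equiv.sum_comp τ a]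
  rw [he] at hp
  have hs : IHZ (((Equiv.Perm.sign τ : ℤ) : MvPolynomial σ R)) 0 := by
    rw [← map_intCast (C : R →+* MvPolynomial σ R)]
    exact isWeightedHomogeneous_C _ _
  simpa using hs.mul hp

lemma sum_orderIsoOfFin {α β : Type*} [LinearOrder α] [AddCommMonoid β] (t : Finset α) {s : ℕ}
    (ht : t.card = s) (f : α → β) :
    ∑ i : Fin s, f (t.orderIsoOfFin ht i) = ∑ x ∈ t, f x := by
  rw [← Finset.sum_coe_sort t f]
  exact Fintype.sum_equiv (t.orderIsoOfFin ht).toEquiv _ _ (fun i => rfl)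

end helpers

/-- The `m × m` skew-symmetric matrix `K` whose `(u,v)` entry, for `u ≠ v`, is
`(−1)^{u−v} Δ_{u,v}`, where `Δ_{u,v}` is the maximal minor of the `(m−2) × m` matrix `B`
omitting columns `u` and `v` (columns taken in increasing order). -/
noncomputable def kmat {R : Type*} [CommRing R] {m : ℕ}
    (B : Matrix (Fin (m - 2)) (Fin m) R) : Matrix (Fin m) (Fin m) R :=
  Matrix.of fun u v =>
    if h : u = v then 0
    else
      (-1 : R) ^ ((u : ℕ) + (v : ℕ)) *
        (B.submatrix id (fun j =>
          ((({u, v}ᶜ : Finset (Fin m)).orderIsoOfFin (by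
            have h2 : ({u, v} : Finset (Fin m)).card = 2 := by
              rw [Finset.card_insert_of_notMem (by simpa using h), Finset.card_singleton]
            rw [Finset.card_compl, h2, Fintype.card_fin]) j :
              {x // x ∈ ({u, v}ᶜ : Finset (Fin m))}) : Fin m))).det


section helpers2
variable {σ : Type*} {R : Type*} [CommRing R]
local notation "IHZ" => IsWeightedHomogeneous (fun _ : σ => (1:ℤ))

lemma ihz_kmat {m : ℕ} (B : Matrix (Fin (m-2)) (Fin m) (MvPolynomial σ R))
    (δ : Fin m → ℕ) (e : Fin (m-2) → ℤ)
    (hB : ∀ l c, IHZ (B l c) (e l - δ c)) (u v : Fin m) :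
    IHZ (kmat B u v) ((∑ l, e l) - (∑ c, (δ c : ℤ)) + δ u + δ v) := by
  rw [kmat]
  simp only [Matrix.of_apply]
  split_ifs with h
  · exact isWeightedHomogeneous_zero _ (fun _ => (1:ℤ)) _
  · have hneg : IHZ ((-1 : MvPolynomial σ R) ^ ((u:ℕ)+(v:ℕ))) 0 := by
      have hC : ((-1 : MvPolynomial σ R) ^ ((u:ℕ)+(v:ℕ))) = C ((-1:R) ^ ((u:ℕ)+(v:ℕ))) := by
        rw [map_pow, map_neg, map_one]
      rw [hC]; exact isWeightedHomogeneous_C _ _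
    have hcard : ({u, v}ᶜ : Finset (Fin m)).card = m - 2 := by
      have h2 : ({u, v} : Finset (Fin m)).card = 2 := by
        rw [Finset.card_insert_of_notMem (by simpa using h), Finset.card_singleton]
      rw [Finset.card_compl, h2, Fintype.card_fin]
    set col : Fin (m-2) → Fin m := fun j =>
      ((({u, v}ᶜ : Finset (Fin m)).orderIsoOfFin hcard j :
        {x // x ∈ ({u, v}ᶜ : Finset (Fin m))}) : Fin m) with hcol
    have hdet := ihz_det (B.submatrix id col) e (fun c => -(δ (col c) : ℤ))
      (fun l c => by simpa [sub_eq_add_neg] using hB l (col c))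
    have hsum : ∑ c, (δ (col c) : ℤ) = (∑ c, (δ c : ℤ)) - δ u - δ v := by
      have h1 : ∑ c, (δ (col c) : ℤ) = ∑ x ∈ ({u,v}ᶜ : Finset (Fin m)), (δ x : ℤ) :=
        sum_orderIsoOfFin _ hcard (fun x => (δ x : ℤ))
      have h2 : ∑ x ∈ ({u,v} : Finset (Fin m)), (δ x : ℤ) +
          ∑ x ∈ ({u,v}ᶜ : Finset (Fin m)), (δ x : ℤ) = ∑ c, (δ c : ℤ) :=
        Finset.sum_add_sum_compl _ _
      have h3 : ∑ x ∈ ({u,v} : Finset (Fin m)), (δ x : ℤ) = δ u + δ v :=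
        Finset.sum_pair h
      rw [h1]
      omega
    have hdeg : (∑ l, e l) + (∑ c, -(δ (col c) : ℤ)) =
        (∑ l, e l) - (∑ c, (δ c : ℤ)) + δ u + δ v := by
      rw [Finset.sum_neg_distrib, hsum]; ring
    rw [hdeg] at hdet
    simpa using hneg.mul hdet

end helpers2

lemma sum_fin_add_two {β : Type*} [AddCommMonoid β] (s : ℕ) (g : Fin (s+2) → β) :
    ∑ c, g c = g ⟨0, by omega⟩ + g ⟨1, by omega⟩ + ∑ l : Fin s, g ⟨(l:ℕ)+2, by omega⟩ := by
  rw [Fin.sum_univ_succ, Fin.sum_univ_succ, ← add_assoc]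
  have h0 : (⟨0, by omega⟩ : Fin (s+2)) = 0 := rfl
  have h1 : (⟨1, by omega⟩ : Fin (s+2)) = (0 : Fin (s+1)).succ := rfl
  rw [h0, h1]
  congr 1

set_option maxHeartbeats 1000000 in
/-- Let `(d, m, δ, ε)` be latent data, `η = [A; B]` a `(d,m,δ,ε)`-level matrix and
`K` the `m × m` skew-symmetric matrix of signed maximal minors of `B`.  Then for all
`1 ≤ i ≤ 3`, `1 ≤ j ≤ m`, the `(i,j)` entry of `A·K` is homogeneous of degree
`δ_j`. -/
theorem level_matrix_AK_entries_homogeneous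
{k : Type*} [Field k] {n : ℕ} (hn : 3 ≤ n)
    (d m : ℕ) (hd : 1 ≤ d) (hm : 3 ≤ m)
    (δ : Fin m → ℕ) (ε : Fin (m - 2) → ℕ)
    (hδ1 : ∀ i, 1 ≤ δ i) (hδmono : Monotone δ) (hε : ∀ i, 1 ≤ ε i)
    (hc1 : ∀ i₁ i₂ : Fin (m - 2), i₁ ≤ i₂ →
      δ ⟨(i₁ : ℕ) + 2, by have := i₁.isLt; omega⟩ + ε i₁ ≤
        δ ⟨(i₂ : ℕ) + 2, by have := i₂.isLt; omega⟩ + ε i₂)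
    (hc2 : δ ⟨0, by omega⟩ + δ ⟨1, by omega⟩ = d + ∑ j, ε j)
    (hc3 : ∀ i j : Fin m, i < j → d + 1 ≤ δ i + δ j)
    (hc4 : δ ⟨2, by omega⟩ ≤ d)
    (η : Matrix (Fin (m + 1)) (Fin m) (MvPolynomial (Fin n) k))
    (A : Matrix (Fin 3) (Fin m) (MvPolynomial (Fin n) k))
    (B : Matrix (Fin (m - 2)) (Fin m) (MvPolynomial (Fin n) k))
    (hA : ∀ (i : Fin 3) (j : Fin m), A i j = η ⟨(i : ℕ), by have := i.isLt; omega⟩ j)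
    (hB : ∀ (i : Fin (m - 2)) (j : Fin m),
      B i j = η ⟨(i : ℕ) + 3, by have := i.isLt; omega⟩ j)
    (hAdeg : ∀ (i : Fin 3) (j : Fin m),
      if δ j ≤ d then (A i j).IsHomogeneous (d - δ j) else A i j = 0)
    (hBdeg : ∀ (i : Fin (m - 2)) (j : Fin m),
      if δ j < δ ⟨(i : ℕ) + 2, by have := i.isLt; omega⟩ + ε i then
        (B i j).IsHomogeneous (δ ⟨(i : ℕ) + 2, by have := i.isLt; omega⟩ + ε i - δ j)
      else B i j = 0)
    (hhtη : idealHeight (minorsIdeal η m) = 2)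
    (hhtB : idealHeight (minorsIdeal B (m - 2)) = 3) :
    ∀ (i : Fin 3) (j : Fin m), ((A * kmat B) i j).IsHomogeneous (δ j) := by
  obtain ⟨s, rfl⟩ : ∃ s, m = s + 2 := ⟨m - 2, by omega⟩
  intro i j
  apply isHomogeneous_of_ihz
  rw [Matrix.mul_apply]
  apply IsWeightedHomogeneous.sum
  intro u _
  set e : Fin (s + 2 - 2) → ℤ :=
    fun l => ((δ ⟨(l:ℕ)+2, by have := l.isLt; omega⟩ : ℕ) : ℤ) + (ε l : ℤ) with he
  have hBihz : ∀ l c, IsWeightedHomogeneous (fun _ : Fin n => (1:ℤ)) (B l c) (e l - δ c) := by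
    intro l c
    have := hBdeg l c
    split_ifs at this with hlt
    · have h2 := ihz_of_isHomogeneous this
      rwa [Nat.cast_sub (le_of_lt hlt), Nat.cast_add] at h2
    · rw [this]
      exact isWeightedHomogeneous_zero _ _ _
  have hK := ihz_kmat B δ e hBihz u j
  have hEsum : (∑ l, e l) = (∑ c, (δ c : ℤ)) - δ ⟨0, by omega⟩ - δ ⟨1, by omega⟩
      + ∑ l, (ε l : ℤ) := by
    have hsplit : ∑ c : Fin (s+2), (δ c : ℤ) =
        (δ ⟨0, by omega⟩ : ℤ) + (δ ⟨1, by omega⟩ : ℤ) +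
        ∑ l : Fin (s+2-2), ((δ ⟨(l:ℕ)+2, by have := l.isLt; omega⟩ : ℕ) : ℤ) :=
      sum_fin_add_two s (fun c => (δ c : ℤ))
    rw [he, Finset.sum_add_distrib]
    rw [hsplit]
    ring
  have hc2' : (δ ⟨0, by omega⟩ : ℤ) + (δ ⟨1, by omega⟩ : ℤ) = (d : ℤ) + ∑ l, (ε l : ℤ) := by
    exact_mod_cast congrArg (Nat.cast : ℕ → ℤ) hc2
  have hKdeg : (∑ l, e l) - (∑ c, (δ c : ℤ)) + δ u + δ j =
      (δ u : ℤ) + (δ j : ℤ) - d := by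
    rw [hEsum]; omega
  rw [hKdeg] at hK
  have hAd := hAdeg i u
  split_ifs at hAd with hle
  · have hA1 := ihz_of_isHomogeneous hAd
    rw [Nat.cast_sub hle] at hA1
    have hprod := hA1.mul hK
    rwa [show ((d : ℤ) - δ u) + ((δ u : ℤ) + (δ j : ℤ) - d) = (δ j : ℤ) by ring] at hprod
  · rw [hAd, zero_mul]
    exact isWeightedHomogeneous_zero _ _ _
end

section
/- Let k be a field and let (d,m,δ,ε) be latent data satisfying additionally δ_{i+2} − δ_{i+3} + ε_i > 0 for all 1 ≤ i ≤ m−3. Consider the (m+1)×m matrix η over k[x,y,z] whose upper 3×m block is lower-bidiagonal with entries x^{d−δ_1}, y^{d−δ_1}, x^{d−δ_2}, y^{d−δ_2}, x^{d−δ_3} in positions (1,1),(2,1),(2,2),(3,2),(3,3), and whose lower (m−2)×m block B has row i (1 ≤ i ≤ m−3) with entries z^{β_{i,i+1}}, y^{β_{i,i+2}}, x^{β_{i,i+3}} in columns i+1, i+2, i+3 (where β_{i,j} = δ_{i+2} − δ_j + ε_i), row m−2 with entries x^{β_{m−2,1}}, z^{β_{m−2,m−1}}, y^{β_{m−2,m}}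 in columns 1, m−1, m, and zeros elsewhere. Then ht I_m(η) ≥ 2 and ht I_{m−2}(B) ≥ 3, so η is a (d,m,δ,ε)-level matrix. -/
open MvPolynomial

/-- The explicit `(m+1) × m` matrix over `k[x,y,z]` of Proposition `exlevel`:
the upper `3 × m` block is lower-bidiagonal with entries `x^{d−δ_j}` on the diagonal and
`y^{d−δ_j}` below it; row `i` of the lower `(m−2) × m` block `B` (for `i` not the last
row, `0`-based) has entries `z^{β}, y^{β}, x^{β}` in columns `i+1, i+2, i+3` (with
`β_{i,j} = δ_{i+2} − δ_j + ε_i`), and the last row has `x^{β}` in column `0`, `z^{β}` in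
column `m−2` and `y^{β}` in column `m−1`; all other entries vanish.
(`X 0 = x`, `X 1 = y`, `X 2 = z`; indices `0`-based.) -/
noncomputable def etaEx {k : Type*} [CommRing k] (d m : ℕ) (hm : 3 ≤ m) (δ : Fin m → ℕ)
    (ε : Fin (m - 2) → ℕ) : Matrix (Fin (m + 1)) (Fin m) (MvPolynomial (Fin 3) k) :=
  Matrix.of fun i j =>
    if _h3 : (i : ℕ) < 3 then
      if (j : ℕ) = (i : ℕ) then X 0 ^ (d - δ j)
      else if (j : ℕ) + 1 = (i : ℕ) then X 1 ^ (d - δ j)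
      else 0
    else
      if (i : ℕ) - 3 = m - 3 then
        if (j : ℕ) = 0 then
          X 0 ^ (δ ⟨(i : ℕ) - 1, by have := i.isLt; omega⟩ +
            ε ⟨(i : ℕ) - 3, by have := i.isLt; omega⟩ - δ j)
        else if (j : ℕ) = m - 2 then
          X 2 ^ (δ ⟨(i : ℕ) - 1, by have := i.isLt; omega⟩ +
            ε ⟨(i : ℕ) - 3, by have := i.isLt; omega⟩ - δ j)
        else if (j : ℕ) = m - 1 then
          X 1 ^ (δ ⟨(i : ℕ) - 1, by have := i.isLt; omega⟩ +
            ε ⟨(i : ℕ) - 3, by have := i.isLt; omega⟩ - δ j)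
        else 0
      else
        if (j : ℕ) = (i : ℕ) - 2 then
          X 2 ^ (δ ⟨(i : ℕ) - 1, by have := i.isLt; omega⟩ +
            ε ⟨(i : ℕ) - 3, by have := i.isLt; omega⟩ - δ j)
        else if (j : ℕ) = (i : ℕ) - 1 then
          X 1 ^ (δ ⟨(i : ℕ) - 1, by have := i.isLt; omega⟩ +
            ε ⟨(i : ℕ) - 3, by have := i.isLt; omega⟩ - δ j)
        else if (j : ℕ) = (i : ℕ) then
          X 0 ^ (δ ⟨(i : ℕ) - 1, by have := i.isLt; omega⟩ +
            ε ⟨(i : ℕ) - 3, by have := i.isLt; omega⟩ - δ j)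
        else 0


lemma span_X_image_isPrime {k : Type*} [Field k] {n : ℕ} (s : Set (Fin n)) :
    (Ideal.span (MvPolynomial.X '' s : Set (MvPolynomial (Fin n) k))).IsPrime := by
  classical
  set φ : MvPolynomial (Fin n) k →ₐ[k] MvPolynomial (Fin n) k :=
    aeval (fun i => if i ∈ s then 0 else X i) with hφ
  have key : ∀ f : MvPolynomial (Fin n) k, f - φ f ∈ Ideal.span (X '' s) := by
    intro f
    induction f using MvPolynomial.induction_on with
    | C a => simp [hφ]
    | add p q hp hq =>
        have h := Ideal.add_mem _ hp hq
        have : p + q - φ (p + q) = (p - φ p) + (q - φ q) := by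
          rw [map_add]; ring
        rwa [this]
    | mul_X p i hp =>
        by_cases hi : i ∈ s
        · have h1 : φ (p * X i) = 0 := by simp [hφ, hi]
          rw [h1, sub_zero]
          exact Ideal.mul_mem_left _ _ (Ideal.subset_span ⟨i, hi, rfl⟩)
        · have h1 : φ (p * X i) = φ p * X i := by simp [hφ, hi]
          have h2 : p * X i - φ p * X i = (p - φ p) * X i := by ring
          rw [h1, h2]
          exact Ideal.mul_mem_right _ _ hp
  have hker : Ideal.span (MvPolynomial.X '' s : Set (MvPolynomial (Fin n) k))
      = RingHom.ker φ := by
    apply le_antisymm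
    · rw [Ideal.span_le]
      rintro _ ⟨i, hi, rfl⟩
      simp [RingHom.mem_ker, hφ, hi]
    · intro f hf
      have h0 : φ f = 0 := hf
      have := key f
      rwa [h0, sub_zero] at this
  rw [hker]
  exact RingHom.ker_isPrime _

lemma X_mem_span_X_image_iff {k : Type*} [Field k] {n : ℕ} (s : Set (Fin n)) (i : Fin n) :
    (X i : MvPolynomial (Fin n) k) ∈ Ideal.span (X '' s) ↔ i ∈ s := by
  rw [mem_ideal_span_X_image]
  simp [MvPolynomial.support_X, Finsupp.single_apply_ne_zero]


lemma two_le_height {R : Type*} [CommRing R] [IsDomain R] {P : PrimeSpectrum R}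
    {Q : Ideal R} (hQ : Q.IsPrime) (h0 : Q ≠ ⊥) (h1 : Q < P.asIdeal) :
    2 ≤ Order.height P := by
  let c : LTSeries (PrimeSpectrum R) :=
    ⟨2, ![⟨⊥, Ideal.bot_prime⟩, ⟨Q, hQ⟩, P], by
      intro i
      fin_cases i
      · show (⟨⊥, Ideal.bot_prime⟩ : PrimeSpectrum R) < ⟨Q, hQ⟩
        rw [← PrimeSpectrum.asIdeal_lt_asIdeal]
        exact bot_lt_iff_ne_bot.mpr h0
      · show (⟨Q, hQ⟩ : PrimeSpectrum R) < P
        rw [← PrimeSpectrum.asIdeal_lt_asIdeal]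
        exact h1⟩
  have h := Order.length_le_height_last (p := c)
  have hlast : c.last = P := rfl
  rw [hlast] at h
  exact_mod_cast h

lemma three_le_height {R : Type*} [CommRing R] [IsDomain R] {P : PrimeSpectrum R}
    {Q1 Q2 : Ideal R} (hQ1 : Q1.IsPrime) (hQ2 : Q2.IsPrime)
    (h0 : Q1 ≠ ⊥) (h1 : Q1 < Q2) (h2 : Q2 < P.asIdeal) :
    3 ≤ Order.height P := by
  let c : LTSeries (PrimeSpectrum R) :=
    ⟨3, ![⟨⊥, Ideal.bot_prime⟩, ⟨Q1, hQ1⟩, ⟨Q2, hQ2⟩, P], by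
      intro i
      fin_cases i
      · show (⟨⊥, Ideal.bot_prime⟩ : PrimeSpectrum R) < ⟨Q1, hQ1⟩
        rw [← PrimeSpectrum.asIdeal_lt_asIdeal]
        exact bot_lt_iff_ne_bot.mpr h0
      · show (⟨Q1, hQ1⟩ : PrimeSpectrum R) < ⟨Q2, hQ2⟩
        rw [← PrimeSpectrum.asIdeal_lt_asIdeal]
        exact h1
      · show (⟨Q2, hQ2⟩ : PrimeSpectrum R) < P
        rw [← PrimeSpectrum.asIdeal_lt_asIdeal]
        exact h2⟩
  have h := Order.length_le_height_last (p := c)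
  have hlast : c.last = P := rfl
  rw [hlast] at h
  exact_mod_cast h

set_option maxHeartbeats 1000000 in
lemma exlevel_B_entries {k : Type*} [Field k]
    (d m : ℕ) (hm : 3 ≤ m)
    (δ : Fin m → ℕ) (ε : Fin (m - 2) → ℕ)
    (B : Matrix (Fin (m - 2)) (Fin m) (MvPolynomial (Fin 3) k))
    (hB : ∀ (i : Fin (m - 2)) (j : Fin m),
      B i j = etaEx d m hm δ ε ⟨(i : ℕ) + 3, by have := i.isLt; omega⟩ j) :
    ∀ (i : Fin (m-2)) (j : Fin m),
    B i j =
      if (i:ℕ) = m-3 then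
        (if (j:ℕ) = 0 then X 0 ^ (δ ⟨m-1, by omega⟩ + ε i - δ j)
         else if (j:ℕ) = m-2 then X 2 ^ (δ ⟨m-1, by omega⟩ + ε i - δ j)
         else if (j:ℕ) = m-1 then X 1 ^ (δ ⟨m-1, by omega⟩ + ε i - δ j)
         else 0)
      else
        (if (j:ℕ) = (i:ℕ)+1 then X 2 ^ (δ ⟨(i:ℕ)+2, by have := i.isLt; omega⟩ + ε i - δ j)
         else if (j:ℕ) = (i:ℕ)+2 then X 1 ^ (δ ⟨(i:ℕ)+2, by have := i.isLt; omega⟩ + ε i - δ j)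
         else if (j:ℕ) = (i:ℕ)+3 then X 0 ^ (δ ⟨(i:ℕ)+2, by have := i.isLt; omega⟩ + ε i - δ j)
         else 0) := by
  intro i j
  rw [hB]
  have him := i.isLt
  simp only [etaEx, Matrix.of_apply]
  rw [dif_neg (by simp only [Fin.val_mk]; omega : ¬ ((⟨(i:ℕ)+3, by omega⟩ : Fin (m+1)) : ℕ) < 3)]
  by_cases hlast : (i:ℕ) = m-3
  · rw [if_pos (by simp only [Fin.val_mk]; omega : ((⟨(i:ℕ)+3, by omega⟩ : Fin (m+1)) : ℕ) - 3 = m - 3),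
      if_pos hlast]
    have e1 : (⟨((⟨(i:ℕ)+3, by omega⟩ : Fin (m+1)) : ℕ) - 1, by omega⟩ : Fin m) = ⟨m-1, by omega⟩ :=
      Fin.ext (by simp; omega)
    have e2 : (⟨((⟨(i:ℕ)+3, by omega⟩ : Fin (m+1)) : ℕ) - 3, by omega⟩ : Fin (m-2)) = i :=
      Fin.ext (by simp)
    simp only [e1, e2]
  · rw [if_neg (by simp only [Fin.val_mk]; omega : ¬ ((⟨(i:ℕ)+3, by omega⟩ : Fin (m+1)) : ℕ) - 3 = m - 3),
      if_neg hlast]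
    have e1 : (⟨((⟨(i:ℕ)+3, by omega⟩ : Fin (m+1)) : ℕ) - 1, by omega⟩ : Fin m) = ⟨(i:ℕ)+2, by omega⟩ :=
      Fin.ext (by simp)
    have e2 : (⟨((⟨(i:ℕ)+3, by omega⟩ : Fin (m+1)) : ℕ) - 3, by omega⟩ : Fin (m-2)) = i :=
      Fin.ext (by simp)
    have e3 : ((⟨(i:ℕ)+3, by omega⟩ : Fin (m+1)) : ℕ) - 2 = (i:ℕ)+1 := by simp
    have e4 : ((⟨(i:ℕ)+3, by omega⟩ : Fin (m+1)) : ℕ) - 1 = (i:ℕ)+2 := by simp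
    have e5 : ((⟨(i:ℕ)+3, by omega⟩ : Fin (m+1)) : ℕ) = (i:ℕ)+3 := by simp
    simp only [e1, e2, e3, e4, e5]


set_option maxHeartbeats 1000000 in
lemma exlevel_part1 {k : Type*} [Field k]
    (d m : ℕ) (hd : 1 ≤ d) (hm : 3 ≤ m)
    (δ : Fin m → ℕ) (ε : Fin (m - 2) → ℕ)
    (hδ1 : ∀ i, 1 ≤ δ i) (hδmono : Monotone δ) (hε : ∀ i, 1 ≤ ε i)
    (P : PrimeSpectrum (MvPolynomial (Fin 3) k))
    (hP : minorsIdeal (etaEx (k := k) d m hm δ ε) m ≤ P.asIdeal) :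
    2 ≤ Order.height P := by
  classical
  have hmono' : ∀ (a b : Fin m), (a:ℕ) ≤ (b:ℕ) → δ a ≤ δ b := fun a b h =>
    hδmono (by rwa [Fin.le_def])
  have hpowmem : ∀ (v : Fin 3) (e : ℕ),
      (X v : MvPolynomial (Fin 3) k)^e ∈ P.asIdeal → (X v : MvPolynomial (Fin 3) k) ∈ P.asIdeal := by
    intro v e h
    rcases Nat.eq_zero_or_pos e with h0 | h0
    · exfalso; rw [h0, pow_zero] at h
      exact P.isPrime.ne_top ((Ideal.eq_top_iff_one _).mpr h)
    · exact (P.isPrime.pow_mem_iff_mem e h0).mp h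
  have hE : ∀ (i : Fin (m+1)) (j : Fin m),
      etaEx (k := k) d m hm δ ε i j =
        if (i:ℕ) < 3 then
          (if (j:ℕ) = (i:ℕ) then X 0 ^ (d - δ j)
           else if (j:ℕ) + 1 = (i:ℕ) then X 1 ^ (d - δ j) else 0)
        else if (i:ℕ) = m then
          (if (j:ℕ) = 0 then X 0 ^ (δ ⟨m-1, by omega⟩ + ε ⟨m-3, by omega⟩ - δ j)
           else if (j:ℕ) = m-2 then X 2 ^ (δ ⟨m-1, by omega⟩ + ε ⟨m-3, by omega⟩ - δ j)
           else if (j:ℕ) = m-1 then X 1 ^ (δ ⟨m-1, by omega⟩ + ε ⟨m-3, by omega⟩ - δ j)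
           else 0)
        else
          (if (j:ℕ) = (i:ℕ)-2 then
            X 2 ^ (δ ⟨(i:ℕ)-1, by have := i.isLt; omega⟩ + ε ⟨(i:ℕ)-3, by have := i.isLt; omega⟩ - δ j)
           else if (j:ℕ) = (i:ℕ)-1 then
            X 1 ^ (δ ⟨(i:ℕ)-1, by have := i.isLt; omega⟩ + ε ⟨(i:ℕ)-3, by have := i.isLt; omega⟩ - δ j)
           else if (j:ℕ) = (i:ℕ) then
            X 0 ^ (δ ⟨(i:ℕ)-1, by have := i.isLt; omega⟩ + ε ⟨(i:ℕ)-3, by have := i.isLt; omega⟩ - δ j)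
           else 0) := by
    intro i j
    have him := i.isLt
    simp only [etaEx, Matrix.of_apply]
    by_cases h1 : (i:ℕ) < 3
    · rw [dif_pos h1, if_pos h1]
    · rw [dif_neg h1, if_neg h1]
      by_cases h2 : (i:ℕ) = m
      · rw [if_pos (by omega : (i:ℕ)-3 = m-3), if_pos h2]
        have e1 : (⟨(i:ℕ)-1, by omega⟩ : Fin m) = ⟨m-1, by omega⟩ := Fin.ext (by simp; omega)
        have e2 : (⟨(i:ℕ)-3, by omega⟩ : Fin (m-2)) = ⟨m-3, by omega⟩ := Fin.ext (by simp; omega)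
        simp only [e1, e2]
      · rw [if_neg (by omega : ¬ (i:ℕ)-3 = m-3), if_neg h2]
  -- first minor: X 0 ∈ P
  set Mp : Matrix (Fin m) (Fin m) (MvPolynomial (Fin 3) k) :=
    (etaEx (k := k) d m hm δ ε).submatrix (fun r => (⟨(r:ℕ), by have := r.isLt; omega⟩ : Fin (m+1))) id
    with hMp
  have hx0 : (X 0 : MvPolynomial (Fin 3) k) ∈ P.asIdeal := by
    have hmem : Mp.det ∈ P.asIdeal := hP (Ideal.subset_span ⟨_, id, congrArg Matrix.det hMp⟩)
    have htri : Mp.BlockTriangular OrderDual.toDual := by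
      intro i j hij
      have hij' : (i:ℕ) < (j:ℕ) := hij
      have him := i.isLt
      show etaEx (k := k) d m hm δ ε ⟨(i:ℕ), by omega⟩ j = 0
      rw [hE]
      simp only [Fin.val_mk]
      split_ifs with h1 h2 h3 h4 h5 h6 h7 h8 h9 <;>
        first
          | rfl
          | (exfalso; omega)
    have hdiag : ∀ i : Fin m, ∃ e, Mp i i = X 0 ^ e := by
      intro i
      have him := i.isLt
      by_cases h1 : (i:ℕ) < 3
      · have hval : Mp i i = X 0 ^ (d - δ i) := by
          show etaEx (k := k) d m hm δ ε ⟨(i:ℕ), by omega⟩ i = _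
          rw [hE]
          simp only [Fin.val_mk]
          rw [if_pos h1, if_pos trivial]
        exact ⟨_, hval⟩
      · have hval : Mp i i =
            X 0 ^ (δ ⟨(i:ℕ)-1, by omega⟩ + ε ⟨(i:ℕ)-3, by omega⟩ - δ i) := by
          show etaEx (k := k) d m hm δ ε ⟨(i:ℕ), by omega⟩ i = _
          rw [hE]
          simp only [Fin.val_mk]
          rw [if_neg h1, if_neg (by omega), if_neg (by omega), if_neg (by omega), if_pos trivial]
        exact ⟨_, hval⟩
    rw [Matrix.det_of_lowerTriangular Mp htri] at hmem
    haveI := P.isPrime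
    obtain ⟨i, -, hi⟩ := Ideal.IsPrime.prod_mem_iff.mp hmem
    obtain ⟨e, he⟩ := hdiag i
    rw [he] at hi
    exact hpowmem _ _ hi
  -- second minor and the evaluation map
  set ψ : MvPolynomial (Fin 3) k →ₐ[k] MvPolynomial (Fin 3) k :=
    aeval (fun v : Fin 3 => if v = 1 then X 1 else 0) with hψ
  have hψ0 : ψ (X 0) = 0 := by simp [hψ]
  have hψ1 : ψ (X 1) = X 1 := by simp [hψ]
  have hψ2 : ψ (X 2) = 0 := by simp [hψ]
  set Mq : Matrix (Fin m) (Fin m) (MvPolynomial (Fin 3) k) :=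
    (etaEx (k := k) d m hm δ ε).submatrix (fun r => (⟨(r:ℕ)+1, by have := r.isLt; omega⟩ : Fin (m+1))) id
    with hMq
  have hqmem : Mq.det ∈ P.asIdeal := hP (Ideal.subset_span ⟨_, id, congrArg Matrix.det hMq⟩)
  have hqpsi : ψ Mq.det ≠ 0 := by
    have hdet : ψ Mq.det = (Mq.map ψ).det := by
      rw [show ψ Mq.det = ψ.toRingHom Mq.det from rfl, RingHom.map_det, RingHom.mapMatrix_apply]
      rfl
    have htri : (Mq.map ψ).BlockTriangular id := by
      intro i j hij
      simp only [id_eq] at hij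
      have hij' : (j:ℕ) < (i:ℕ) := hij
      have him := i.isLt
      have hjm := j.isLt
      show ψ (etaEx (k := k) d m hm δ ε ⟨(i:ℕ)+1, by omega⟩ j) = 0
      rw [hE]
      simp only [Fin.val_mk]
      by_cases h1 : (i:ℕ)+1 < 3
      · rw [if_pos h1, if_neg (by omega), if_neg (by omega), map_zero]
      · rw [if_neg h1]
        by_cases h2 : (i:ℕ)+1 = m
        · rw [if_pos h2]
          by_cases h3 : (j:ℕ) = 0
          · rw [if_pos h3, map_pow, hψ0, zero_pow]
            have hm1 := hmono' j ⟨m-1, by omega⟩ (by simp only [Fin.val_mk]; omega)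
            have hε1 := hε ⟨m-3, by omega⟩
            omega
          · rw [if_neg h3]
            by_cases h4 : (j:ℕ) = m-2
            · rw [if_pos h4, map_pow, hψ2, zero_pow]
              have hm1 := hmono' j ⟨m-1, by omega⟩ (by simp only [Fin.val_mk]; omega)
              have hε1 := hε ⟨m-3, by omega⟩
              omega
            · rw [if_neg h4, if_neg (by omega), map_zero]
        · rw [if_neg h2]
          by_cases h3 : (j:ℕ) = (i:ℕ)+1-2
          · rw [if_pos h3, map_pow, hψ2, zero_pow]
            have hm1 := hmono' j ⟨(i:ℕ)+1-1, by omega⟩ (by simp only [Fin.val_mk]; omega)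
            have hε1 := hε ⟨(i:ℕ)+1-3, by omega⟩
            omega
          · rw [if_neg h3, if_neg (by omega), if_neg (by omega), map_zero]
    have hdiagq : ∀ i : Fin m, ∃ e, (Mq.map ψ) i i = X 1 ^ e := by
      intro i
      have him := i.isLt
      by_cases h1 : (i:ℕ)+1 < 3
      · have hval : (Mq.map ψ) i i = X 1 ^ (d - δ i) := by
          show ψ (etaEx (k := k) d m hm δ ε ⟨(i:ℕ)+1, by omega⟩ i) = _
          rw [hE]
          simp only [Fin.val_mk]
          rw [if_pos h1, if_neg (by omega), if_pos trivial, map_pow, hψ1]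
        exact ⟨_, hval⟩
      · by_cases h2 : (i:ℕ)+1 = m
        · have hval : (Mq.map ψ) i i =
              X 1 ^ (δ ⟨m-1, by omega⟩ + ε ⟨m-3, by omega⟩ - δ i) := by
            show ψ (etaEx (k := k) d m hm δ ε ⟨(i:ℕ)+1, by omega⟩ i) = _
            rw [hE]
            simp only [Fin.val_mk]
            rw [if_neg h1, if_pos h2, if_neg (by omega), if_neg (by omega),
              if_pos (by omega), map_pow, hψ1]
          exact ⟨_, hval⟩
        · have hval : (Mq.map ψ) i i =
              X 1 ^ (δ ⟨(i:ℕ)+1-1, by omega⟩ + ε ⟨(i:ℕ)+1-3, by omega⟩ - δ i) := by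
            show ψ (etaEx (k := k) d m hm δ ε ⟨(i:ℕ)+1, by omega⟩ i) = _
            rw [hE]
            simp only [Fin.val_mk]
            rw [if_neg h1, if_neg h2, if_neg (by omega), if_pos (by omega), map_pow, hψ1]
          exact ⟨_, hval⟩
    rw [hdet, Matrix.det_of_upperTriangular htri]
    rw [Finset.prod_ne_zero_iff]
    intro i _
    obtain ⟨e, he⟩ := hdiagq i
    rw [he]
    exact pow_ne_zero _ (MvPolynomial.X_ne_zero _)
  -- conclude
  have hspan_prime : (Ideal.span {(X 0 : MvPolynomial (Fin 3) k)}).IsPrime := by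
    have := span_X_image_isPrime (k := k) ({0} : Set (Fin 3))
    simpa using this
  have hlt : Ideal.span {(X 0 : MvPolynomial (Fin 3) k)} < P.asIdeal := by
    refine lt_of_le_of_ne (Ideal.span_le.mpr (by simpa using hx0)) ?_
    intro heq
    rw [← heq] at hqmem
    obtain ⟨g, hg⟩ := Ideal.mem_span_singleton.mp hqmem
    rw [hg, map_mul, hψ0, zero_mul] at hqpsi
    exact hqpsi rfl
  refine two_le_height hspan_prime ?_ hlt
  simpa [Ideal.span_singleton_eq_bot] using MvPolynomial.X_ne_zero (R := k) (0 : Fin 3)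


set_option maxHeartbeats 1000000 in
lemma exlevel_part2 {k : Type*} [Field k]
    (d m : ℕ) (hd : 1 ≤ d) (hm : 3 ≤ m)
    (δ : Fin m → ℕ) (ε : Fin (m - 2) → ℕ)
    (hδ1 : ∀ i, 1 ≤ δ i) (hδmono : Monotone δ) (hε : ∀ i, 1 ≤ ε i)
    (hc5 : ∀ (r : Fin (m - 2)) (hr : (r : ℕ) + 3 ≤ m - 1),
      δ ⟨(r : ℕ) + 3, by have h2 : (r : ℕ) + 3 < m := (by omega); exact h2⟩ <
        δ ⟨(r : ℕ) + 2, by have := r.isLt; have h2 : (r : ℕ) + 2 < m := (by omega); exact h2⟩ + ε r)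
    (B : Matrix (Fin (m - 2)) (Fin m) (MvPolynomial (Fin 3) k))
    (hBE : ∀ (i : Fin (m-2)) (j : Fin m),
    B i j =
      if (i:ℕ) = m-3 then
        (if (j:ℕ) = 0 then X 0 ^ (δ ⟨m-1, by omega⟩ + ε i - δ j)
         else if (j:ℕ) = m-2 then X 2 ^ (δ ⟨m-1, by omega⟩ + ε i - δ j)
         else if (j:ℕ) = m-1 then X 1 ^ (δ ⟨m-1, by omega⟩ + ε i - δ j)
         else 0)
      else
        (if (j:ℕ) = (i:ℕ)+1 then X 2 ^ (δ ⟨(i:ℕ)+2, by have := i.isLt; have h2 : (i:ℕ)+2 < m := (by omega); exact h2⟩ + ε i - δ j)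
         else if (j:ℕ) = (i:ℕ)+2 then X 1 ^ (δ ⟨(i:ℕ)+2, by have := i.isLt; have h2 : (i:ℕ)+2 < m := (by omega); exact h2⟩ + ε i - δ j)
         else if (j:ℕ) = (i:ℕ)+3 then X 0 ^ (δ ⟨(i:ℕ)+2, by have := i.isLt; have h2 : (i:ℕ)+2 < m := (by omega); exact h2⟩ + ε i - δ j)
         else 0))
    (P : PrimeSpectrum (MvPolynomial (Fin 3) k))
    (hP : minorsIdeal B (m - 2) ≤ P.asIdeal) :
    (X 0 : MvPolynomial (Fin 3) k) ∈ P.asIdeal ∧ (X 1 : MvPolynomial (Fin 3) k) ∈ P.asIdeal ∧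
      (X 2 : MvPolynomial (Fin 3) k) ∈ P.asIdeal := by
  classical
  have hmono' : ∀ (a b : Fin m), (a:ℕ) ≤ (b:ℕ) → δ a ≤ δ b := fun a b h =>
    hδmono (by rwa [Fin.le_def])
  have hpowmem : ∀ (v : Fin 3) (e : ℕ), (X v : MvPolynomial (Fin 3) k)^e ∈ P.asIdeal → (X v : MvPolynomial (Fin 3) k) ∈ P.asIdeal := by
    intro v e h
    rcases Nat.eq_zero_or_pos e with h0 | h0
    · exfalso; rw [h0, pow_zero] at h
      exact P.isPrime.ne_top ((Ideal.eq_top_iff_one _).mpr h)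
    · exact (P.isPrime.pow_mem_iff_mem e h0).mp h
  -- the quotient
  -- Step 1 : X 2 ∈ P
  have hz : (X 2 : MvPolynomial (Fin 3) k) ∈ P.asIdeal := by
    set M1 : Matrix (Fin (m-2)) (Fin (m-2)) (MvPolynomial (Fin 3) k) :=
      B.submatrix id (fun j => (⟨(j:ℕ)+1, by have := j.isLt; omega⟩ : Fin m)) with hM1
    have hmem : M1.det ∈ P.asIdeal := hP (Ideal.subset_span ⟨id, _, congrArg Matrix.det hM1⟩)
    have htri : M1.BlockTriangular id := by
      intro i j hij
      simp only [id_eq] at hij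
      have hij' : (j:ℕ) < (i:ℕ) := hij
      have him := i.isLt
      show B i ⟨(j:ℕ)+1, by omega⟩ = 0
      rw [hBE]
      split_ifs with h1 h2 h3 h4 h5 h6 h7 <;>
        first
          | rfl
          | (exfalso; simp only [Fin.val_mk, id_eq] at * <;> omega)
    have hdiag : ∀ i : Fin (m-2), ∃ e, 1 ≤ e ∧ M1 i i = X 2 ^ e := by
      intro i
      have him := i.isLt
      by_cases h : (i:ℕ) = m-3
      · refine ⟨δ ⟨m-1, by omega⟩ + ε i - δ ⟨(i:ℕ)+1, by omega⟩, ?_, ?_⟩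
        · have h1 := hmono' ⟨(i:ℕ)+1, by omega⟩ ⟨m-1, by omega⟩ (by simp only [Fin.val_mk]; omega)
          have h2 := hε i
          omega
        · show B i _ = _
          rw [hBE, if_pos h, if_neg (by simp only [Fin.val_mk]; omega),
            if_pos (by simp only [Fin.val_mk]; omega)]
      · refine ⟨δ ⟨(i:ℕ)+2, by omega⟩ + ε i - δ ⟨(i:ℕ)+1, by omega⟩, ?_, ?_⟩
        · have h1 := hmono' ⟨(i:ℕ)+1, by omega⟩ ⟨(i:ℕ)+2, by omega⟩ (by simp only [Fin.val_mk]; omega)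
          have h2 := hε i
          omega
        · show B i _ = _
          rw [hBE, if_neg h, if_pos (by simp only [Fin.val_mk])]
    rw [Matrix.det_of_upperTriangular htri] at hmem
    haveI := P.isPrime
    obtain ⟨i, -, hi⟩ := Ideal.IsPrime.prod_mem_iff.mp hmem
    obtain ⟨e, he1, he2⟩ := hdiag i
    rw [he2] at hi
    exact hpowmem _ _ hi
  -- Step 2 : X 1 ∈ P
  have hy : (X 1 : MvPolynomial (Fin 3) k) ∈ P.asIdeal := by
    set M2 : Matrix (Fin (m-2)) (Fin (m-2)) (MvPolynomial (Fin 3) k) :=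
      B.submatrix id (fun j => (⟨(j:ℕ)+2, by have := j.isLt; omega⟩ : Fin m)) with hM2
    have hmem : M2.det ∈ P.asIdeal := hP (Ideal.subset_span ⟨id, _, congrArg Matrix.det hM2⟩)
    have hmem0 : (Ideal.Quotient.mk P.asIdeal) M2.det = 0 := Ideal.Quotient.eq_zero_iff_mem.mpr hmem
    rw [RingHom.map_det, RingHom.mapMatrix_apply] at hmem0
    have hqz : (Ideal.Quotient.mk P.asIdeal) (X 2) = 0 := Ideal.Quotient.eq_zero_iff_mem.mpr hz
    have htri : (M2.map (Ideal.Quotient.mk P.asIdeal)).BlockTriangular id := by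
      intro i j hij
      simp only [id_eq] at hij
      have hij' : (j:ℕ) < (i:ℕ) := hij
      have him := i.isLt
      show (Ideal.Quotient.mk P.asIdeal) (B i ⟨(j:ℕ)+2, by omega⟩) = 0
      rw [hBE]
      by_cases h : (i:ℕ) = m-3
      · by_cases h2 : (j:ℕ)+2 = m-2
        · rw [if_pos h, if_neg (by simp only [Fin.val_mk]; omega),
            if_pos (by simp only [Fin.val_mk]; omega), map_pow, hqz, zero_pow]
          have h1 := hmono' ⟨(j:ℕ)+2, by omega⟩ ⟨m-1, by omega⟩ (by simp only [Fin.val_mk]; omega)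
          have h2 := hε i
          omega
        · rw [if_pos h, if_neg (by simp only [Fin.val_mk]; omega),
            if_neg (by simp only [Fin.val_mk]; omega),
            if_neg (by simp only [Fin.val_mk]; omega), map_zero]
      · by_cases h2 : (j:ℕ)+2 = (i:ℕ)+1
        · rw [if_neg h, if_pos (by simp only [Fin.val_mk]; omega), map_pow, hqz, zero_pow]
          have h1 := hmono' ⟨(j:ℕ)+2, by omega⟩ ⟨(i:ℕ)+2, by omega⟩ (by simp only [Fin.val_mk]; omega)
          have h2 := hε i
          omega
        · rw [if_neg h, if_neg (by simp only [Fin.val_mk]; omega),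
            if_neg (by simp only [Fin.val_mk]; omega),
            if_neg (by simp only [Fin.val_mk]; omega), map_zero]
    have hdiag : ∀ i : Fin (m-2), ∃ e, 1 ≤ e ∧ M2 i i = X 1 ^ e := by
      intro i
      have him := i.isLt
      by_cases h : (i:ℕ) = m-3
      · refine ⟨δ ⟨m-1, by omega⟩ + ε i - δ ⟨(i:ℕ)+2, by omega⟩, ?_, ?_⟩
        · have h1 := hmono' ⟨(i:ℕ)+2, by omega⟩ ⟨m-1, by omega⟩ (by simp only [Fin.val_mk]; omega)
          have h2 := hε i
          have h3 := hmono' ⟨m-1, by omega⟩ ⟨(i:ℕ)+2, by omega⟩ (by simp only [Fin.val_mk]; omega)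
          omega
        · show B i _ = _
          rw [hBE, if_pos h, if_neg (by simp only [Fin.val_mk]; omega),
            if_neg (by simp only [Fin.val_mk]; omega),
            if_pos (by simp only [Fin.val_mk]; omega)]
      · refine ⟨δ ⟨(i:ℕ)+2, by omega⟩ + ε i - δ ⟨(i:ℕ)+2, by omega⟩, ?_, ?_⟩
        · have h2 := hε i
          omega
        · show B i _ = _
          rw [hBE, if_neg h, if_neg (by simp only [Fin.val_mk]; omega),
            if_pos (by simp only [Fin.val_mk])]
    rw [Matrix.det_of_upperTriangular htri] at hmem0
    haveI := P.isPrime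
    obtain ⟨i, -, hi⟩ := Finset.prod_eq_zero_iff.mp hmem0
    obtain ⟨e, he1, he2⟩ := hdiag i
    rw [Matrix.map_apply, he2, map_pow] at hi
    have : (Ideal.Quotient.mk P.asIdeal) (X 1) = 0 := by
      have := pow_eq_zero_iff (by omega : e ≠ 0) |>.mp hi
      exact this
    exact Ideal.Quotient.eq_zero_iff_mem.mp this
  -- Step 3 : X 0 ∈ P
  have hx : (X 0 : MvPolynomial (Fin 3) k) ∈ P.asIdeal := by
    set M3 : Matrix (Fin (m-2)) (Fin (m-2)) (MvPolynomial (Fin 3) k) :=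
      B.submatrix id (fun j => if h : (j:ℕ) = m-3 then (⟨0, by omega⟩ : Fin m)
        else ⟨(j:ℕ)+3, by have := j.isLt; omega⟩) with hM3
    have hmem : M3.det ∈ P.asIdeal := hP (Ideal.subset_span ⟨id, _, congrArg Matrix.det hM3⟩)
    have hmem0 : (Ideal.Quotient.mk P.asIdeal) M3.det = 0 := Ideal.Quotient.eq_zero_iff_mem.mpr hmem
    rw [RingHom.map_det, RingHom.mapMatrix_apply] at hmem0
    have hqz : (Ideal.Quotient.mk P.asIdeal) (X 2) = 0 := Ideal.Quotient.eq_zero_iff_mem.mpr hz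
    have hqy : (Ideal.Quotient.mk P.asIdeal) (X 1) = 0 := Ideal.Quotient.eq_zero_iff_mem.mpr hy
    have htri : (M3.map (Ideal.Quotient.mk P.asIdeal)).BlockTriangular id := by
      intro i j hij
      simp only [id_eq] at hij
      have hij' : (j:ℕ) < (i:ℕ) := hij
      have him := i.isLt
      have hjm := j.isLt
      have hj : ¬ ((j:ℕ) = m-3) := by omega
      show (Ideal.Quotient.mk P.asIdeal) (B i (if h : (j:ℕ) = m-3 then (⟨0, by omega⟩ : Fin m) else ⟨(j:ℕ)+3, by omega⟩)) = 0
      rw [dif_neg hj, hBE]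
      by_cases h : (i:ℕ) = m-3
      · rw [if_pos h]
        by_cases h2 : (j:ℕ)+3 = m-2
        · rw [if_neg (by simp only [Fin.val_mk]; omega),
            if_pos (by simp only [Fin.val_mk]; omega), map_pow, hqz, zero_pow]
          have h1 := hmono' ⟨(j:ℕ)+3, by omega⟩ ⟨m-1, by omega⟩ (by simp only [Fin.val_mk]; omega)
          have hε1 := hε i
          omega
        · by_cases h3 : (j:ℕ)+3 = m-1
          · rw [if_neg (by simp only [Fin.val_mk]; omega),
              if_neg (by simp only [Fin.val_mk]; omega),
              if_pos (by simp only [Fin.val_mk]; omega), map_pow, hqy, zero_pow]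
            have h1 := hmono' ⟨(j:ℕ)+3, by omega⟩ ⟨m-1, by omega⟩ (by simp only [Fin.val_mk]; omega)
            have hε1 := hε i
            omega
          · rw [if_neg (by simp only [Fin.val_mk]; omega),
              if_neg (by simp only [Fin.val_mk]; omega),
              if_neg (by simp only [Fin.val_mk]; omega), map_zero]
      · rw [if_neg h]
        by_cases h2 : (j:ℕ)+3 = (i:ℕ)+1
        · rw [if_pos (by simp only [Fin.val_mk]; omega), map_pow, hqz, zero_pow]
          have h1 := hmono' ⟨(j:ℕ)+3, by omega⟩ ⟨(i:ℕ)+2, by omega⟩ (by simp only [Fin.val_mk]; omega)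
          have hε1 := hε i
          omega
        · by_cases h3 : (j:ℕ)+3 = (i:ℕ)+2
          · rw [if_neg (by simp only [Fin.val_mk]; omega),
              if_pos (by simp only [Fin.val_mk]; omega), map_pow, hqy, zero_pow]
            have h1 := hmono' ⟨(j:ℕ)+3, by omega⟩ ⟨(i:ℕ)+2, by omega⟩ (by simp only [Fin.val_mk]; omega)
            have hε1 := hε i
            omega
          · rw [if_neg (by simp only [Fin.val_mk]; omega),
              if_neg (by simp only [Fin.val_mk]; omega),
              if_neg (by simp only [Fin.val_mk]; omega), map_zero]
    have hdiag : ∀ i : Fin (m-2), ∃ e, 1 ≤ e ∧ M3 i i = X 0 ^ e := by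
      intro i
      have him := i.isLt
      by_cases h : (i:ℕ) = m-3
      · refine ⟨δ ⟨m-1, by omega⟩ + ε i - δ ⟨0, by omega⟩, ?_, ?_⟩
        · have h1 := hmono' ⟨0, by omega⟩ ⟨m-1, by omega⟩ (by simp only [Fin.val_mk]; omega)
          have h2 := hε i
          omega
        · show B i (if h' : (i:ℕ) = m-3 then (⟨0, by omega⟩ : Fin m) else ⟨(i:ℕ)+3, by omega⟩) = _
          rw [dif_pos h, hBE, if_pos h, if_pos (by simp only [Fin.val_mk])]
      · refine ⟨δ ⟨(i:ℕ)+2, by omega⟩ + ε i - δ ⟨(i:ℕ)+3, by omega⟩, ?_, ?_⟩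
        · have h5 := hc5 i (by omega)
          have e1 : (⟨(i:ℕ)+3, by omega⟩ : Fin m) = ⟨(i:ℕ)+3, by omega⟩ := rfl
          omega
        · show B i (if h' : (i:ℕ) = m-3 then (⟨0, by omega⟩ : Fin m) else ⟨(i:ℕ)+3, by omega⟩) = _
          rw [dif_neg h, hBE, if_neg h, if_neg (by simp only [Fin.val_mk]; omega),
            if_neg (by simp only [Fin.val_mk]; omega),
            if_pos (by simp only [Fin.val_mk])]
    rw [Matrix.det_of_upperTriangular htri] at hmem0
    haveI := P.isPrime
    obtain ⟨i, -, hi⟩ := Finset.prod_eq_zero_iff.mp hmem0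
    obtain ⟨e, he1, he2⟩ := hdiag i
    rw [Matrix.map_apply, he2, map_pow] at hi
    have : (Ideal.Quotient.mk P.asIdeal) (X 0) = 0 := pow_eq_zero_iff (by omega : e ≠ 0) |>.mp hi
    exact Ideal.Quotient.eq_zero_iff_mem.mp this
  exact ⟨hx, hy, hz⟩


/-- For latent data `(d,m,δ,ε)` satisfying additionally `δ_{i+2} − δ_{i+3} + ε_i > 0`
for all `1 ≤ i ≤ m−3`, the explicit matrix `etaEx` above satisfies `ht I_m(η) ≥ 2` and
`ht I_{m−2}(B) ≥ 3` (so it is a `(d,m,δ,ε)`-level matrix). -/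
theorem etaEx_is_level {k : Type*} [Field k]
    (d m : ℕ) (hd : 1 ≤ d) (hm : 3 ≤ m)
    (δ : Fin m → ℕ) (ε : Fin (m - 2) → ℕ)
    (hδ1 : ∀ i, 1 ≤ δ i) (hδmono : Monotone δ) (hε : ∀ i, 1 ≤ ε i)
    (hc1 : ∀ i₁ i₂ : Fin (m - 2), i₁ ≤ i₂ →
      δ ⟨(i₁ : ℕ) + 2, by have := i₁.isLt; omega⟩ + ε i₁ ≤
        δ ⟨(i₂ : ℕ) + 2, by have := i₂.isLt; omega⟩ + ε i₂)
    (hc2 : δ ⟨0, by omega⟩ + δ ⟨1, by omega⟩ = d + ∑ j, ε j)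
    (hc3 : ∀ i j : Fin m, i < j → d + 1 ≤ δ i + δ j)
    (hc4 : δ ⟨2, by omega⟩ ≤ d)
    (hc5 : ∀ (r : Fin (m - 2)) (hr : (r : ℕ) + 3 ≤ m - 1),
      δ ⟨(r : ℕ) + 3, by omega⟩ <
        δ ⟨(r : ℕ) + 2, by have := r.isLt; omega⟩ + ε r)
    (B : Matrix (Fin (m - 2)) (Fin m) (MvPolynomial (Fin 3) k))
    (hB : ∀ (i : Fin (m - 2)) (j : Fin m),
      B i j = etaEx d m hm δ ε ⟨(i : ℕ) + 3, by have := i.isLt; omega⟩ j) :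
    2 ≤ idealHeight (minorsIdeal (etaEx (k := k) d m hm δ ε) m) ∧
      3 ≤ idealHeight (minorsIdeal B (m - 2)) := by
  classical
  have hBE := exlevel_B_entries d m hm δ ε B hB
  constructor
  · simp only [idealHeight]
    refine le_iInf fun P => le_iInf fun hP => ?_
    exact_mod_cast exlevel_part1 d m hd hm δ ε hδ1 hδmono hε P hP
  · simp only [idealHeight]
    refine le_iInf fun P => le_iInf fun hP => ?_
    obtain ⟨hx, hy, hz⟩ := exlevel_part2 d m hd hm δ ε hδ1 hδmono hε hc5 B hBE P hP
    have hQ1prime : (Ideal.span {(X 0 : MvPolynomial (Fin 3) k)}).IsPrime := by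
      have := span_X_image_isPrime (k := k) ({0} : Set (Fin 3))
      simpa using this
    have hQ2prime : (Ideal.span {(X 0 : MvPolynomial (Fin 3) k), X 1}).IsPrime := by
      have := span_X_image_isPrime (k := k) ({0, 1} : Set (Fin 3))
      simpa [Set.image_insert_eq] using this
    have h3 : 3 ≤ Order.height P := by
      refine three_le_height hQ1prime hQ2prime ?_ ?_ ?_
      · simpa [Ideal.span_singleton_eq_bot] using MvPolynomial.X_ne_zero (R := k) (0 : Fin 3)
      · refine lt_of_le_of_ne (Ideal.span_mono (by simp)) ?_
        intro heq
        have h1 : (X 1 : MvPolynomial (Fin 3) k) ∈ Ideal.span {(X 0 : MvPolynomial (Fin 3) k), X 1} :=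
          Ideal.subset_span (by simp)
        rw [← heq] at h1
        have h2 := X_mem_span_X_image_iff (k := k) ({0} : Set (Fin 3)) 1
        rw [Set.image_singleton] at h2
        simpa using h2.mp h1
      · refine lt_of_le_of_ne (Ideal.span_le.mpr ?_) ?_
        · rintro t ht
          simp only [Set.mem_insert_iff, Set.mem_singleton_iff] at ht
          rcases ht with rfl | rfl
          · exact hx
          · exact hy
        · intro heq
          rw [← heq] at hz
          have h2 := X_mem_span_X_image_iff (k := k) ({0, 1} : Set (Fin 3)) 2
          rw [Set.image_insert_eq, Set.image_singleton] at h2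
          simpa using h2.mp hz
    exact_mod_cast h3
end

section
/- Let k be a field, d ≥ 2, and f = x^{d+1} + y^d z ∈ k[x,y,z]. The 4×3 matrix η with rows (y^{d−1},0,0), (0,1,0), (0,0,1), ((d+1)x^d, y, dz) satisfies: the maximal minors of η fixing the last row are, up to sign, the partial derivatives f_x = (d+1)x^d, f_y = d y^{d−1} z, f_z = y^d of f; moreover ht I_3(η) = 2 and ht I_1((d+1)x^d, y, dz) = 3 (assuming char k does not divide d(d+1)). -/
open MvPolynomial

open Finset

section Aux

lemma chain_aux {R : Type*} [CommRing R] : ∀ (m : ℕ) (p : ℕ → Ideal R),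
    (∀ i, (p i).IsPrime) → (∀ i, p i ≤ p (i + 1)) →
    ∀ (f : ℕ → R) (α : ℕ → ℕ) (r : ℕ → R),
    (∀ i, i < m → f i ∈ p (i + 1) ∧ f i ∉ p i) →
    ((∏ j ∈ range m, f j ^ α j) -
      ∑ i ∈ range m, r i * ((∏ j ∈ range i, f j ^ α j) * f i ^ (α i + 1))) ∈ p 0 →
    False := by
  intro m
  induction m with
  | zero =>
      intro p hp _ f α r _ hmem
      simp only [range_zero, prod_empty, sum_empty, sub_zero] at hmem
      exact (hp 0).ne_top (Ideal.eq_top_of_isUnit_mem _ hmem isUnit_one)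
  | succ m ih =>
      intro p hp hmono f α r hf hmem
      have hf0 := hf 0 (Nat.succ_pos m)
      rw [prod_range_succ', sum_range_succ'] at hmem
      have h1 : ∀ i ∈ range m,
          r (i + 1) * ((∏ j ∈ range (i + 1), f j ^ α j) * f (i + 1) ^ (α (i + 1) + 1))
          = f 0 ^ α 0 * (r (i + 1) *
              ((∏ j ∈ range i, f (j + 1) ^ α (j + 1)) * f (i + 1) ^ (α (i + 1) + 1))) := by
        intro i _
        rw [prod_range_succ']
        ring
      rw [sum_congr rfl h1, ← mul_sum] at hmem
      have key : (∏ j ∈ range m, f (j + 1) ^ α (j + 1)) * f 0 ^ α 0 -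
          (f 0 ^ α 0 * ∑ i ∈ range m, r (i + 1) *
              ((∏ j ∈ range i, f (j + 1) ^ α (j + 1)) * f (i + 1) ^ (α (i + 1) + 1))
            + r 0 * ((∏ j ∈ range 0, f j ^ α j) * f 0 ^ (α 0 + 1)))
          = f 0 ^ α 0 * ((∏ j ∈ range m, f (j + 1) ^ α (j + 1)) -
              ((∑ i ∈ range m, r (i + 1) *
                ((∏ j ∈ range i, f (j + 1) ^ α (j + 1)) * f (i + 1) ^ (α (i + 1) + 1)))
                + r 0 * f 0)) := by
        rw [prod_range_zero]
        ring
      rw [key] at hmem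
      have hB : ((∏ j ∈ range m, f (j + 1) ^ α (j + 1)) -
          ((∑ i ∈ range m, r (i + 1) *
            ((∏ j ∈ range i, f (j + 1) ^ α (j + 1)) * f (i + 1) ^ (α (i + 1) + 1)))
            + r 0 * f 0)) ∈ p 0 := by
        rcases (hp 0).mem_or_mem hmem with h | h
        · exact absurd ((hp 0).mem_of_pow_mem _ h) hf0.2
        · exact h
      have hB1 := hmono 0 hB
      have hfin : ((∏ j ∈ range m, f (j + 1) ^ α (j + 1)) -
          ∑ i ∈ range m, r (i + 1) *
            ((∏ j ∈ range i, f (j + 1) ^ α (j + 1)) * f (i + 1) ^ (α (i + 1) + 1))) ∈ p 1 := by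
        have hr0 : r 0 * f 0 ∈ p 1 := Ideal.mul_mem_left _ _ hf0.1
        have := Ideal.add_mem _ hB1 hr0
        convert this using 1
        ring
      exact ih (fun i => p (i + 1)) (fun i => hp (i + 1)) (fun i => hmono (i + 1))
        (fun i => f (i + 1)) (fun i => α (i + 1)) (fun i => r (i + 1))
        (fun i hi => hf (i + 1) (by omega)) hfin
open Finset MvPolynomial

variable {k : Type*} [Field k] {n : ℕ}

noncomputable def monomialSet (k : Type*) [Field k] (n M : ℕ) :
    Finset (MvPolynomial (Fin n) k) := by
  classical
  exact Finset.image (fun e : Fin n → Fin (M + 1) =>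
    ∏ i, (X i : MvPolynomial (Fin n) k) ^ (e i : ℕ)) Finset.univ

lemma monomialSet_card_le (M : ℕ) : (monomialSet k n M).card ≤ (M + 1) ^ n := by
  classical
  refine le_trans (Finset.card_image_le) ?_
  simp [Finset.card_univ]

lemma mem_span_monomials {M : ℕ} (p : MvPolynomial (Fin n) k) (hp : p.totalDegree ≤ M) :
    p ∈ Submodule.span k ((monomialSet k n M : Finset _) : Set (MvPolynomial (Fin n) k)) := by
  classical
  nth_rewrite 1 [p.as_sum]
  refine Submodule.sum_mem _ fun β hβ => ?_
  have hβM : ∀ i, β i ≤ M := by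
    intro i
    refine le_trans ?_ (le_trans (le_totalDegree hβ) hp)
    by_cases hi : i ∈ β.support
    · exact Finset.single_le_sum (fun _ _ => Nat.zero_le _) hi
    · simp [Finsupp.notMem_support_iff.1 hi]
  have hmono : (monomial β (1 : k)) = ∏ i : Fin n, (X i : MvPolynomial (Fin n) k) ^ β i := by
    rw [monic_monomial_eq, Finsupp.prod]
    refine Finset.prod_subset (Finset.subset_univ _) fun i _ hi => ?_
    rw [Finsupp.notMem_support_iff.1 hi, pow_zero]
  have hsm : monomial β (coeff β p) = (coeff β p) • (monomial β (1 : k)) := by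
    rw [smul_monomial, smul_eq_mul, mul_one]
  rw [hsm]
  refine Submodule.smul_mem _ _ (Submodule.subset_span ?_)
  simp only [monomialSet, Finset.coe_image, Set.mem_image, Finset.coe_univ, Set.mem_univ, true_and]
  exact ⟨fun i => ⟨β i, Nat.lt_succ_of_le (hβM i)⟩, by rw [hmono]⟩

lemma cl_not_linearIndependent (f : ℕ → MvPolynomial (Fin n) k) {m D N : ℕ}
    (hD : ∀ j < m, (f j).totalDegree ≤ D) (hN : (m * D + 1) ^ n < N) (hm : n < m) :
    ¬ LinearIndependent k (fun τ : Fin m → Fin N =>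
      ∏ j : Fin m, f ↑j ^ (τ j : ℕ)) := by
  intro hli
  set M := m * ((N - 1) * D) with hM
  have hNpos : 0 < N := lt_of_le_of_lt (Nat.zero_le _) hN
  have hdeg : ∀ τ : Fin m → Fin N, (∏ j : Fin m, f ↑j ^ (τ j : ℕ)).totalDegree ≤ M := by
    intro τ
    refine le_trans (totalDegree_finset_prod _ _) ?_
    calc ∑ j : Fin m, (f ↑j ^ (τ j : ℕ)).totalDegree
        ≤ ∑ _j : Fin m, (N - 1) * D := by
          refine Finset.sum_le_sum fun j _ => ?_
          refine le_trans (totalDegree_pow _ _) ?_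
          exact Nat.mul_le_mul (Nat.le_sub_one_of_lt (τ j).2) (hD _ j.2)
      _ = M := by rw [Finset.sum_const, Finset.card_univ, Fintype.card_fin, smul_eq_mul]
  have hsub : Set.range (fun τ : Fin m → Fin N => ∏ j : Fin m, f ↑j ^ (τ j : ℕ))
      ≤ Submodule.span k ((monomialSet k n M : Finset _) : Set (MvPolynomial (Fin n) k)) := by
    rintro _ ⟨τ, rfl⟩
    exact mem_span_monomials _ (hdeg τ)
  have hcard := linearIndependent_le_span' _ hli _ hsub
  rw [Cardinal.mk_fintype, Fintype.card_fun, Fintype.card_fin, Fintype.card_fin] at hcard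
  have hcard2 : (N ^ m : Cardinal) ≤ ((monomialSet k n M).card : Cardinal) := by
    simpa [Fintype.card_coe] using hcard
  have hcard3 : N ^ m ≤ (monomialSet k n M).card := by exact_mod_cast hcard2
  have hfin : N ^ m ≤ (M + 1) ^ n := le_trans hcard3 (monomialSet_card_le M)
  have h1 : M + 1 ≤ (m * D + 1) * N := by
    calc M + 1 = m * D * (N - 1) + 1 := by rw [hM]; ring
      _ ≤ m * D * N + 1 * N := Nat.add_le_add (Nat.mul_le_mul_left _ (Nat.sub_le N 1))
          (by omega)
      _ = (m * D + 1) * N := by ring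
  have h2 : (M + 1) ^ n < N ^ m := by
    calc (M + 1) ^ n ≤ ((m * D + 1) * N) ^ n := Nat.pow_le_pow_left h1 n
      _ = (m * D + 1) ^ n * N ^ n := mul_pow _ _ _
      _ < N * N ^ n := mul_lt_mul_of_pos_right hN (pow_pos hNpos n)
      _ = N ^ (n + 1) := (pow_succ' N n).symm
      _ ≤ N ^ m := Nat.pow_le_pow_right hNpos hm
  exact absurd hfin (Nat.not_le.2 h2)


lemma cl_criterion (f : ℕ → MvPolynomial (Fin n) k) :
    ∃ a : ℕ → ℕ, (∏ j ∈ range (n + 1), f j ^ a j) ∈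
      Ideal.span ((fun i => (∏ j ∈ range i, f j ^ a j) * f i ^ (a i + 1)) '' Set.Iio (n + 1)) := by
  classical
  set m := n + 1 with hm
  set D := (∑ j ∈ range m, (f j).totalDegree) + 1 with hDdef
  have hD : ∀ j < m, (f j).totalDegree ≤ D := fun j hj =>
    le_trans (Finset.single_le_sum (f := fun j => (f j).totalDegree)
      (fun _ _ => Nat.zero_le _) (mem_range.2 hj)) (Nat.le_succ _)
  set N := (m * D + 1) ^ n + 1 with hNdef
  have hN : (m * D + 1) ^ n < N := Nat.lt_succ_self _
  have hnli := cl_not_linearIndependent f hD hN (Nat.lt_succ_self n)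
  rw [Fintype.not_linearIndependent_iff] at hnli
  obtain ⟨c, hsum, i0, hi0⟩ := hnli
  set A : Finset (Fin m → Fin N) := Finset.univ.filter (fun τ => c τ ≠ 0) with hA
  have hi0A : i0 ∈ A := by simp [hA, hi0]
  have hAne : (A.image (toLex : (Fin m → Fin N) → Lex (Fin m → Fin N))).Nonempty :=
    ⟨toLex i0, Finset.mem_image_of_mem _ hi0A⟩
  obtain ⟨ℓ, hℓmem, hℓmin⟩ : ∃ ℓ ∈ A.image (toLex : (Fin m → Fin N) → Lex (Fin m → Fin N)),
      ∀ x ∈ A.image (toLex : (Fin m → Fin N) → Lex (Fin m → Fin N)), ¬ x < ℓ := by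
    obtain ⟨ℓ, h⟩ := Finset.exists_minimal hAne
    exact ⟨ℓ, h.1, fun x hx => h.not_lt hx⟩
  obtain ⟨α, hαA, hαℓ⟩ := Finset.mem_image.1 hℓmem
  have hcα : c α ≠ 0 := by simpa [hA] using hαA
  have htri := Pi.isTrichotomous_lex (β := fun _ : Fin m => Fin N)
    (· < ·) (fun {_} => (· < ·)) (IsWellFounded.wf)
  have hminlt : ∀ β ∈ A, β ≠ α → toLex α < toLex β := by
    intro β hβ hne
    have hnlt : ¬ (toLex β < toLex α) := hαℓ ▸ hℓmin _ (Finset.mem_image_of_mem _ hβ)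
    rcases or_iff_not_imp_left.2 (fun h1 => or_iff_not_imp_right.2 (htri.trichotomous β α h1)) with h | h | h
    · exact absurd h hnlt
    · exact absurd h hne
    · exact h
  set a : ℕ → ℕ := fun i => if h : i < m then (α ⟨i, h⟩ : ℕ) else 0 with ha
  set G : ℕ → MvPolynomial (Fin n) k :=
    fun i => (∏ j ∈ range i, f j ^ a j) * f i ^ (a i + 1) with hG
  set J : Ideal (MvPolynomial (Fin n) k) := Ideal.span (G '' Set.Iio m) with hJ
  set v : (Fin m → Fin N) → MvPolynomial (Fin n) k :=
    fun τ => ∏ j : Fin m, f ↑j ^ (τ j : ℕ) with hv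
  have hvJ : ∀ β ∈ A, β ≠ α → v β ∈ J := by
    intro β hβ hne
    obtain ⟨i, hpre, hlti⟩ := hminlt β hβ hne
    have him : i.1 < m := i.2
    have hdvd : G i.1 ∣ v β := by
      have h1 : v β = ∏ j ∈ range m, f j ^ (if h : j < m then (β ⟨j, h⟩ : ℕ) else 0) := by
        rw [Finset.prod_range]
        exact Finset.prod_congr rfl fun j _ => by simp
      rw [h1, ← Finset.prod_range_mul_prod_Ico _ (le_of_lt him)]
      have h2 : (∏ j ∈ range i.1, f j ^ (if h : j < m then (β ⟨j, h⟩ : ℕ) else 0))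
          = ∏ j ∈ range i.1, f j ^ a j := by
        refine Finset.prod_congr rfl fun j hj => ?_
        rw [mem_range] at hj
        have hjm : j < m := lt_trans hj him
        have heq : α ⟨j, hjm⟩ = β ⟨j, hjm⟩ := hpre ⟨j, hjm⟩ (by simpa [Fin.lt_def] using hj)
        rw [ha]
        simp only [dif_pos hjm]
        rw [heq]
      rw [h2, hG]
      refine mul_dvd_mul_left _ ?_
      have hle : a i.1 + 1 ≤ (if h : i.1 < m then (β ⟨i.1, h⟩ : ℕ) else 0) := by
        rw [ha]
        simp only [dif_pos him, Fin.eta]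
        have hln : (α i : ℕ) < (β i : ℕ) := hlti
        omega
      exact dvd_trans (pow_dvd_pow _ hle)
        (Finset.dvd_prod_of_mem _ (Finset.mem_Ico.2 ⟨le_refl _, him⟩))
    obtain ⟨t, ht⟩ := hdvd
    rw [ht]
    exact Ideal.mul_mem_right _ _ (Ideal.subset_span ⟨i.1, him, rfl⟩)
  have hvα : v α ∈ J := by
    have hsplit : (c α) • v α = - ∑ τ ∈ Finset.univ.erase α, c τ • v τ := by
      rw [eq_neg_iff_add_eq_zero, add_comm, Finset.sum_erase_add _ _ (Finset.mem_univ α)]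
      exact hsum
    have hmem : (C (c α) * v α : MvPolynomial (Fin n) k) ∈ J := by
      rw [← MvPolynomial.smul_eq_C_mul, hsplit]
      refine neg_mem (Submodule.sum_mem _ fun τ hτ => ?_)
      by_cases hcτ : c τ = 0
      · simp [hcτ]
      · rw [MvPolynomial.smul_eq_C_mul]
        exact Ideal.mul_mem_left _ _ (hvJ τ (by simp [hA, hcτ]) (Finset.ne_of_mem_erase hτ))
    have hval : v α = C ((c α)⁻¹) * (C (c α) * v α) := by
      rw [← mul_assoc, ← map_mul, inv_mul_cancel₀ hcα, map_one, one_mul]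
    rw [hval]
    exact Ideal.mul_mem_left _ _ hmem
  refine ⟨a, ?_⟩
  have hfin : (∏ j ∈ range m, f j ^ a j) = v α := by
    rw [Finset.prod_range fun j => f j ^ a j]
    exact Finset.prod_congr rfl fun j _ => by rw [ha]; simp
  rw [hfin]
  exact hvα

lemma mem_span_image_Iio {R : Type*} [CommRing R] (G : ℕ → R) (m : ℕ) {x : R}
    (h : x ∈ Ideal.span (G '' Set.Iio m)) :
    ∃ r : ℕ → R, x = ∑ i ∈ range m, r i * G i := by
  refine Submodule.span_induction ?_ ?_ ?_ ?_ h
  · rintro _ ⟨i, hi, rfl⟩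
    refine ⟨fun j => if j = i then 1 else 0, ?_⟩
    rw [Finset.sum_eq_single i]
    · simp
    · intro b _ hb; simp [hb]
    · intro hi'; exact absurd (Finset.mem_range.2 hi) hi'
  · exact ⟨0, by simp⟩
  · rintro x y - - ⟨r, rfl⟩ ⟨s, rfl⟩
    exact ⟨fun i => r i + s i, by
      rw [← Finset.sum_add_distrib]
      exact Finset.sum_congr rfl fun i _ => by ring⟩
  · rintro t x - ⟨r, rfl⟩
    refine ⟨fun i => t * r i, ?_⟩
    rw [smul_eq_mul, Finset.mul_sum]
    exact Finset.sum_congr rfl fun i _ => by ring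

/-- Any chain of primes in `k[X₁,…,Xₙ]` has length at most `n`. -/
lemma ltSeries_length_le (q : LTSeries (PrimeSpectrum (MvPolynomial (Fin n) k))) :
    q.length ≤ n := by
  by_contra hlen
  push_neg at hlen
  have hlen' : n + 1 ≤ q.length := hlen
  set p : ℕ → Ideal (MvPolynomial (Fin n) k) :=
    fun i => (q ⟨min i (n + 1), by omega⟩).asIdeal with hp
  have hprime : ∀ i, (p i).IsPrime := fun i => (q _).isPrime
  have hmono : ∀ i, p i ≤ p (i + 1) := by
    intro i
    have h := q.monotone (a := ⟨min i (n + 1), by omega⟩) (b := ⟨min (i + 1) (n + 1), by omega⟩)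
      (Fin.mk_le_mk.2 (by omega))
    exact h
  have hstrict : ∀ i, i < n + 1 → p i < p (i + 1) := by
    intro i hi
    have h := q.strictMono (a := ⟨min i (n + 1), by omega⟩) (b := ⟨min (i + 1) (n + 1), by omega⟩)
      (Fin.mk_lt_mk.2 (by omega))
    exact h
  have hex : ∀ i, i < n + 1 → ∃ x, x ∈ p (i + 1) ∧ x ∉ p i := by
    intro i hi
    obtain ⟨x, hx1, hx2⟩ := SetLike.exists_of_lt (hstrict i hi)
    exact ⟨x, hx1, hx2⟩
  choose! f hf using hex
  obtain ⟨a, haspan⟩ := cl_criterion (k := k) (n := n) f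
  obtain ⟨r, hr⟩ := mem_span_image_Iio _ _ haspan
  refine chain_aux (n + 1) p hprime hmono f a r (fun i hi => hf i hi) ?_
  rw [hr, sub_self]
  exact (p 0).zero_mem

lemma height_le_n (P : PrimeSpectrum (MvPolynomial (Fin n) k)) :
    Order.height P ≤ (n : ℕ∞) := by
  refine Order.height_le fun q _ => ?_
  exact_mod_cast ltSeries_length_le q

/-! ### The coordinate primes -/

noncomputable def killVars (k : Type*) [Field k] (s : Set (Fin 3)) [DecidablePred (· ∈ s)] :
    MvPolynomial (Fin 3) k →+* MvPolynomial (Fin 3) k :=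
  (aeval (fun i => if i ∈ s then 0 else X i) : MvPolynomial (Fin 3) k →ₐ[k] _).toRingHom

lemma killVars_X_mem {s : Set (Fin 3)} [DecidablePred (· ∈ s)] {i : Fin 3} (h : i ∈ s) :
    killVars k s (X i) = 0 := by simp [killVars, h]

lemma killVars_X_not_mem {s : Set (Fin 3)} [DecidablePred (· ∈ s)] {i : Fin 3} (h : i ∉ s) :
    killVars k s (X i) = X i := by simp [killVars, h]

lemma sub_killVars_mem (s : Set (Fin 3)) [DecidablePred (· ∈ s)] (p : MvPolynomial (Fin 3) k) :
    p - killVars k s p ∈ Ideal.span ((fun i => (X i : MvPolynomial (Fin 3) k)) '' s) := by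
  induction p using MvPolynomial.induction_on with
  | C a => simp [killVars]
  | add p q hp hq => rw [map_add]; convert Ideal.add_mem _ hp hq using 1; ring
  | mul_X p i hp =>
      rw [map_mul]
      have hrw : p * X i - killVars k s p * killVars k s (X i)
          = (p - killVars k s p) * X i + killVars k s p * (X i - killVars k s (X i)) := by ring
      rw [hrw]
      refine Ideal.add_mem _ (Ideal.mul_mem_right _ _ hp) (Ideal.mul_mem_left _ _ ?_)
      by_cases h : i ∈ s
      · rw [killVars_X_mem h, sub_zero]
        exact Ideal.subset_span ⟨i, h, rfl⟩
      · rw [killVars_X_not_mem h, sub_self]; exact Ideal.zero_mem _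

lemma span_X_eq_ker (s : Set (Fin 3)) [DecidablePred (· ∈ s)] :
    Ideal.span ((fun i => (X i : MvPolynomial (Fin 3) k)) '' s)
      = RingHom.ker (killVars k s) := by
  apply le_antisymm
  · rw [Ideal.span_le]
    rintro _ ⟨i, hi, rfl⟩
    simp [RingHom.mem_ker, killVars_X_mem hi]
  · intro p hp
    rw [RingHom.mem_ker] at hp
    have h := sub_killVars_mem (k := k) s p
    rwa [hp, sub_zero] at h

lemma span_X_isPrime (s : Set (Fin 3)) [DecidablePred (· ∈ s)] :
    (Ideal.span ((fun i => (X i : MvPolynomial (Fin 3) k)) '' s)).IsPrime := by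
  rw [span_X_eq_ker]
  exact RingHom.ker_isPrime _

lemma not_mem_span_X {s : Set (Fin 3)} [DecidablePred (· ∈ s)] {i : Fin 3} (h : i ∉ s) :
    (X i : MvPolynomial (Fin 3) k) ∉
      Ideal.span ((fun i => (X i : MvPolynomial (Fin 3) k)) '' s) := by
  rw [span_X_eq_ker, RingHom.mem_ker, killVars_X_not_mem h]
  exact X_ne_zero i

section Heights

variable (k)

open Classical in
noncomputable def cP1 : PrimeSpectrum (MvPolynomial (Fin 3) k) :=
  ⟨Ideal.span ((fun i => (X i : MvPolynomial (Fin 3) k)) '' ({0} : Set (Fin 3))),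
    span_X_isPrime _⟩

open Classical in
noncomputable def cP2 : PrimeSpectrum (MvPolynomial (Fin 3) k) :=
  ⟨Ideal.span ((fun i => (X i : MvPolynomial (Fin 3) k)) '' ({0, 1} : Set (Fin 3))),
    span_X_isPrime _⟩

open Classical in
noncomputable def cP3 : PrimeSpectrum (MvPolynomial (Fin 3) k) :=
  ⟨Ideal.span ((fun i => (X i : MvPolynomial (Fin 3) k)) '' ({0, 1, 2} : Set (Fin 3))),
    span_X_isPrime _⟩

noncomputable def cP0 : PrimeSpectrum (MvPolynomial (Fin 3) k) :=
  ⟨⊥, Ideal.bot_prime⟩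

lemma height_add_one_le {α : Type*} [Preorder α] {a b : α} (hab : a < b) :
    Order.height a + 1 ≤ Order.height b := by
  rw [Order.height_eq_iSup_lt_height b]
  exact le_iSup₂ (f := fun y (_ : y < b) => Order.height y + 1) a hab

lemma cP0_lt_cP1 : cP0 k < cP1 k := by
  classical
  rw [show ((cP0 k < cP1 k)) ↔ (cP0 k).asIdeal < (cP1 k).asIdeal from Iff.rfl]
  rw [lt_iff_le_and_ne]
  constructor
  · exact bot_le
  · intro h
    have hX : (X 0 : MvPolynomial (Fin 3) k) ∈ (cP1 k).asIdeal :=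
      Ideal.subset_span ⟨0, rfl, rfl⟩
    rw [← h] at hX
    simp only [cP0, Ideal.mem_bot] at hX
    exact X_ne_zero 0 hX

lemma cP1_lt_cP2 : cP1 k < cP2 k := by
  classical
  rw [show ((cP1 k < cP2 k)) ↔ (cP1 k).asIdeal < (cP2 k).asIdeal from Iff.rfl]
  rw [lt_iff_le_and_ne]
  constructor
  · exact Ideal.span_mono (Set.image_mono (by simp))
  · intro h
    have hX : (X 1 : MvPolynomial (Fin 3) k) ∈ (cP2 k).asIdeal :=
      Ideal.subset_span ⟨1, by simp, rfl⟩
    rw [← h] at hX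
    exact not_mem_span_X (by simp) hX

lemma cP2_lt_cP3 : cP2 k < cP3 k := by
  classical
  rw [show ((cP2 k < cP3 k)) ↔ (cP2 k).asIdeal < (cP3 k).asIdeal from Iff.rfl]
  rw [lt_iff_le_and_ne]
  constructor
  · exact Ideal.span_mono (Set.image_mono (by intro x hx; simp at hx; rcases hx with h | h <;> simp [h]))
  · intro h
    have hX : (X 2 : MvPolynomial (Fin 3) k) ∈ (cP3 k).asIdeal :=
      Ideal.subset_span ⟨2, by simp, rfl⟩
    rw [← h] at hX
    exact not_mem_span_X (s := ({0,1} : Set (Fin 3))) (by simp) hX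

lemma enat_le_of_add_one_le {x : ℕ∞} {m : ℕ} (h : x + 1 ≤ ((m + 1 : ℕ) : ℕ∞)) : x ≤ m := by
  cases x using ENat.recTopCoe with
  | top =>
      rw [top_add, top_le_iff] at h
      exact absurd h.symm (ENat.coe_ne_top _).symm
  | coe y =>
      have : (y : ℕ∞) + 1 = ((y + 1 : ℕ) : ℕ∞) := by push_cast; ring
      rw [this] at h
      have : y + 1 ≤ m + 1 := by exact_mod_cast h
      exact_mod_cast Nat.lt_succ_iff.1 (Nat.lt_succ_of_le (by omega))

lemma height_cP2 : Order.height (cP2 k) = 2 := by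
  apply le_antisymm
  · have h23 := height_add_one_le (cP2_lt_cP3 k)
    have h3 := height_le_n (k := k) (n := 3) (cP3 k)
    exact enat_le_of_add_one_le (le_trans h23 h3)
  · have h01 := height_add_one_le (cP0_lt_cP1 k)
    have h12 := height_add_one_le (cP1_lt_cP2 k)
    calc (2 : ℕ∞) = 0 + 1 + 1 := by norm_num
      _ ≤ Order.height (cP0 k) + 1 + 1 := by gcongr <;> exact zero_le
      _ ≤ Order.height (cP1 k) + 1 := by gcongr
      _ ≤ Order.height (cP2 k) := h12

lemma height_cP3 : Order.height (cP3 k) = 3 := by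
  apply le_antisymm
  · exact_mod_cast height_le_n (k := k) (n := 3) (cP3 k)
  · have h01 := height_add_one_le (cP0_lt_cP1 k)
    have h12 := height_add_one_le (cP1_lt_cP2 k)
    have h23 := height_add_one_le (cP2_lt_cP3 k)
    calc (3 : ℕ∞) = 0 + 1 + 1 + 1 := by norm_num
      _ ≤ Order.height (cP0 k) + 1 + 1 + 1 := by gcongr <;> exact zero_le
      _ ≤ Order.height (cP1 k) + 1 + 1 := by gcongr
      _ ≤ Order.height (cP2 k) + 1 := by gcongr
      _ ≤ Order.height (cP3 k) := h23

end Heights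

lemma idealHeight_eq_of_min {R : Type*} [CommRing R] (I : Ideal R) (P0 : PrimeSpectrum R)
    (h1 : I ≤ P0.asIdeal) (h2 : ∀ P : PrimeSpectrum R, I ≤ P.asIdeal → P0 ≤ P) :
    idealHeight I = Order.height P0 :=
  le_antisymm (iInf_le_of_le P0 (iInf_le _ h1))
    (le_iInf fun P => le_iInf fun hP => Order.height_mono (h2 P hP))

end Aux

/-- **Higher cuspidal plane curves.**  Let `k` be a field with `char k ∤ d(d+1)`, `d ≥ 2`,
and `f = x^{d+1} + y^d z ∈ k[x,y,z]`.  The `4 × 3` matrix `η` with rows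
`(y^{d−1},0,0), (0,1,0), (0,0,1), ((d+1)x^d, y, dz)` satisfies: the signed maximal minors
of `η` fixing the last row are, up to sign/order, the partial derivatives
`f_x = (d+1)x^d`, `f_z = y^d`, `f_y = d y^{d−1} z`; moreover `ht I₃(η) = 2` and the ideal
generated by the entries of the last row, `⟨(d+1)x^d, y, dz⟩`, has height `3`.
(`x = X 0`, `y = X 1`, `z = X 2`.) -/
theorem higher_cuspidal {k : Type*} [Field k] (d : ℕ) (hd : 2 ≤ d)
    (hchar₁ : (d : k) ≠ 0) (hchar₂ : (d : k) + 1 ≠ 0)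
    (f : MvPolynomial (Fin 3) k) (hf : f = X 0 ^ (d + 1) + X 1 ^ d * X 2)
    (η : Matrix (Fin 4) (Fin 3) (MvPolynomial (Fin 3) k))
    (hη : η = Matrix.of
      ![![X 1 ^ (d - 1), 0, 0], ![0, 1, 0], ![0, 0, 1],
        ![((d : MvPolynomial (Fin 3) k) + 1) * X 0 ^ d, X 1,
          (d : MvPolynomial (Fin 3) k) * X 2]]) :
    (-1 : MvPolynomial (Fin 3) k) ^ ((0 : Fin 3) : ℕ) *
        (η.submatrix (Fin.castSucc (0 : Fin 3)).succAbove id).det = pderiv (0 : Fin 3) f ∧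
    (-1 : MvPolynomial (Fin 3) k) ^ ((1 : Fin 3) : ℕ) *
        (η.submatrix (Fin.castSucc (1 : Fin 3)).succAbove id).det = pderiv (2 : Fin 3) f ∧
    (-1 : MvPolynomial (Fin 3) k) ^ ((2 : Fin 3) : ℕ) *
        (η.submatrix (Fin.castSucc (2 : Fin 3)).succAbove id).det = pderiv (1 : Fin 3) f ∧
    idealHeight (minorsIdeal η 3) = 2 ∧
    idealHeight (Ideal.span
      {((d : MvPolynomial (Fin 3) k) + 1) * X 0 ^ d, X 1,
        (d : MvPolynomial (Fin 3) k) * X 2}) = 3 := by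
  classical
  subst hf hη
  set R := MvPolynomial (Fin 3) k
  set η : Matrix (Fin 4) (Fin 3) R := Matrix.of
      ![![X 1 ^ (d - 1), 0, 0], ![0, 1, 0], ![0, 0, 1],
        ![((d : R) + 1) * X 0 ^ d, X 1, (d : R) * X 2]] with hη
  have hcast : ((d : R) + 1) = C ((d : k) + 1) := by rw [map_add, map_natCast, map_one]
  have hdcast : (d : R) = C ((d : k)) := (map_natCast C d).symm
  -- memberships of variables in the coordinate primes
  have hX0_2 : (X 0 : R) ∈ (cP2 k).asIdeal := Ideal.subset_span ⟨0, by simp, rfl⟩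
  have hX1_2 : (X 1 : R) ∈ (cP2 k).asIdeal := Ideal.subset_span ⟨1, by simp, rfl⟩
  have hX0_3 : (X 0 : R) ∈ (cP3 k).asIdeal := Ideal.subset_span ⟨0, by simp, rfl⟩
  have hX1_3 : (X 1 : R) ∈ (cP3 k).asIdeal := Ideal.subset_span ⟨1, by simp, rfl⟩
  have hX2_3 : (X 2 : R) ∈ (cP3 k).asIdeal := Ideal.subset_span ⟨2, by simp, rfl⟩
  refine ⟨?_, ?_, ?_, ?_, ?_⟩
  · -- f_x
    have h1 : (η.submatrix (Fin.castSucc (0 : Fin 3)).succAbove id).det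
        = ((d : R) + 1) * X 0 ^ d := by
      rw [hη, Matrix.det_fin_three]
      norm_num [Fin.succAbove, Fin.lt_def, Matrix.submatrix_apply, Matrix.cons_val_two, Matrix.vecHead, Matrix.vecTail]
    have h2 : pderiv (0 : Fin 3) ((X 0 : R) ^ (d + 1) + X 1 ^ d * X 2)
        = ((d : R) + 1) * X 0 ^ d := by
      simp [pderiv_pow, pderiv_X_self, pderiv_X_of_ne]
      try (push_cast; ring)
    rw [h1, h2]
    norm_num
  · -- f_z
    have h1 : (η.submatrix (Fin.castSucc (1 : Fin 3)).succAbove id).det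
        = -(X 1 ^ (d - 1) * X 1) := by
      rw [hη, Matrix.det_fin_three]
      norm_num [Fin.succAbove, Fin.lt_def, Matrix.submatrix_apply, Matrix.cons_val_two, Matrix.vecHead, Matrix.vecTail]
      try ring
    have h2 : pderiv (2 : Fin 3) ((X 0 : R) ^ (d + 1) + X 1 ^ d * X 2) = X 1 ^ d := by
      simp [pderiv_pow, pderiv_X_self, pderiv_X_of_ne]
    rw [h1, h2]
    have h3 : (X 1 : R) ^ (d - 1) * X 1 = X 1 ^ d := by
      rw [← pow_succ]
      congr 1
      omega
    rw [show ((1 : Fin 3) : ℕ) = 1 from rfl]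
    rw [pow_one]
    rw [← h3]
    ring
  · -- f_y
    have h1 : (η.submatrix (Fin.castSucc (2 : Fin 3)).succAbove id).det
        = X 1 ^ (d - 1) * ((d : R) * X 2) := by
      rw [hη, Matrix.det_fin_three]
      norm_num [Fin.succAbove, Fin.lt_def, Matrix.submatrix_apply, Matrix.cons_val_two, Matrix.vecHead, Matrix.vecTail]
    have h2 : pderiv (1 : Fin 3) ((X 0 : R) ^ (d + 1) + X 1 ^ d * X 2)
        = (d : R) * X 1 ^ (d - 1) * X 2 := by
      simp [pderiv_pow, pderiv_X_self, pderiv_X_of_ne]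
      try ring
    rw [h1, h2]
    norm_num
    ring
  · -- height of I₃(η) = 2
    have hgen1 : (X 1 ^ (d - 1) : R) ∈ minorsIdeal η 3 := by
      refine Ideal.subset_span ⟨![0, 1, 2], id, ?_⟩
      rw [hη, Matrix.det_fin_three]
      norm_num [Matrix.submatrix_apply, Matrix.cons_val_two, Matrix.vecHead, Matrix.vecTail]
    have hgen2 : (((d : R) + 1) * X 0 ^ d : R) ∈ minorsIdeal η 3 := by
      refine Ideal.subset_span ⟨![1, 2, 3], id, ?_⟩
      rw [hη, Matrix.det_fin_three]
      norm_num [Matrix.submatrix_apply, Matrix.cons_val_two, Matrix.cons_val_three, Matrix.vecHead, Matrix.vecTail]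
    have hle : minorsIdeal η 3 ≤ (cP2 k).asIdeal := by
      rw [minorsIdeal, Ideal.span_le]
      rintro x ⟨r, c, rfl⟩
      rw [SetLike.mem_coe, ← Ideal.Quotient.eq_zero_iff_mem]
      rw [RingHom.map_det, RingHom.mapMatrix_apply, ← Matrix.submatrix_map]
      set mk := Ideal.Quotient.mk (cP2 k).asIdeal
      have hcol : ∀ i : Fin 4, mk (η i 0) = 0 := by
        intro i
        rw [Ideal.Quotient.eq_zero_iff_mem]
        fin_cases i <;> simp only [hη, Matrix.of_apply, Matrix.cons_val', Matrix.cons_val_zero,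
          Matrix.cons_val_one, Matrix.head_cons, Matrix.empty_val', Matrix.cons_val_fin_one,
          Matrix.head_fin_const]
        · exact Ideal.pow_mem_of_mem _ hX1_2 _ (by omega)
        · exact Ideal.zero_mem _
        · exact Ideal.zero_mem _
        · exact Ideal.mul_mem_left _ _ (Ideal.pow_mem_of_mem _ hX0_2 _ (by omega))
      by_cases hc : ∃ j, c j = 0
      · obtain ⟨j, hj⟩ := hc
        apply Matrix.det_eq_zero_of_column_eq_zero j
        intro i
        simp only [Matrix.submatrix_apply, Matrix.map_apply, hj]
        exact hcol (r i)
      · push_neg at hc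
        have hninj : ¬ Function.Injective c := by
          intro hinj
          obtain ⟨j, hj⟩ := (Finite.injective_iff_surjective.1 hinj) 0
          exact hc j hj
        rw [Function.not_injective_iff] at hninj
        obtain ⟨a, b, hab, hne⟩ := hninj
        apply Matrix.det_zero_of_column_eq hne
        intro i
        simp [Matrix.submatrix_apply, hab]
    have hmin : ∀ P : PrimeSpectrum R, minorsIdeal η 3 ≤ P.asIdeal → cP2 k ≤ P := by
      intro P hP
      have h1 : (X 1 : R) ∈ P.asIdeal := P.isPrime.mem_of_pow_mem (d - 1) (hP hgen1)
      have h0 : (X 0 : R) ∈ P.asIdeal := by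
        have hu : IsUnit (C ((d : k) + 1) : R) := (isUnit_iff_ne_zero.2 hchar₂).map C
        have hm := hP hgen2
        rw [hcast] at hm
        have hpow := (P.isPrime.mem_or_mem hm).resolve_left
          (fun hC => P.isPrime.ne_top (Ideal.eq_top_of_isUnit_mem _ hC hu))
        exact P.isPrime.mem_of_pow_mem d hpow
      show (cP2 k).asIdeal ≤ P.asIdeal
      rw [cP2, Ideal.span_le]
      rintro _ ⟨i, hi, rfl⟩
      rcases hi with rfl | hi
      · exact h0
      · rcases hi with rfl
        exact h1
    exact (idealHeight_eq_of_min _ (cP2 k) hle hmin).trans (height_cP2 k)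
  · -- height of the entries ideal = 3
    have hle : Ideal.span {((d : R) + 1) * X 0 ^ d, X 1, (d : R) * X 2} ≤ (cP3 k).asIdeal := by
      rw [Ideal.span_le]
      rintro x hx
      rcases hx with rfl | rfl | rfl
      · exact Ideal.mul_mem_left _ _ (Ideal.pow_mem_of_mem _ hX0_3 _ (by omega))
      · exact hX1_3
      · exact Ideal.mul_mem_left _ _ hX2_3
    have hmin : ∀ P : PrimeSpectrum R,
        Ideal.span {((d : R) + 1) * X 0 ^ d, X 1, (d : R) * X 2} ≤ P.asIdeal → cP3 k ≤ P := by
      intro P hP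
      have hg1 : (((d : R) + 1) * X 0 ^ d : R) ∈ P.asIdeal :=
        hP (Ideal.subset_span (Set.mem_insert _ _))
      have hg2 : (X 1 : R) ∈ P.asIdeal :=
        hP (Ideal.subset_span (Set.mem_insert_of_mem _ (Set.mem_insert _ _)))
      have hg3 : ((d : R) * X 2 : R) ∈ P.asIdeal :=
        hP (Ideal.subset_span (Set.mem_insert_of_mem _ (Set.mem_insert_of_mem _ rfl)))
      have h0 : (X 0 : R) ∈ P.asIdeal := by
        have hu : IsUnit (C ((d : k) + 1) : R) := (isUnit_iff_ne_zero.2 hchar₂).map C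
        rw [hcast] at hg1
        have hpow := (P.isPrime.mem_or_mem hg1).resolve_left
          (fun hC => P.isPrime.ne_top (Ideal.eq_top_of_isUnit_mem _ hC hu))
        exact P.isPrime.mem_of_pow_mem d hpow
      have h2 : (X 2 : R) ∈ P.asIdeal := by
        have hu : IsUnit (C ((d : k)) : R) := (isUnit_iff_ne_zero.2 hchar₁).map C
        rw [hdcast] at hg3
        exact (P.isPrime.mem_or_mem hg3).resolve_left
          (fun hC => P.isPrime.ne_top (Ideal.eq_top_of_isUnit_mem _ hC hu))
      show (cP3 k).asIdeal ≤ P.asIdeal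
      rw [cP3, Ideal.span_le]
      rintro _ ⟨i, hi, rfl⟩
      rcases hi with rfl | hi
      · exact h0
      · rcases hi with rfl | hi
        · exact hg2
        · rcases hi with rfl
          exact h2
    exact (idealHeight_eq_of_min _ (cP3 k) hle hmin).trans (height_cP3 k)
end
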